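/- arXiv:1007.2312 — 6 statements merged into one kernel-verified Lean document; each statement's English description precedes it below -/
import Mathlib

section
/- Let L/K be a finite Galois extension of fields with Galois group G = {γ₁ = id, γ₂, …, γₙ}. A family of elements x₁, …, xₙ ∈ L is a K-basis of L if and only if the determinant of the n×n matrix whose (i,j)-entry is γⱼ⁻¹(xᵢ) is nonzero. -/
/-- Let `L/K` be a finite Galois extension with Galois group
`G = {γ₁ = id, γ₂, …, γₙ}`.  A family `x₁, …, xₙ ∈ L` is a `K`-basis of `L` iff
`det (γⱼ⁻¹ (xᵢ)) ≠ 0`. -/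
theorem normal_basis_det_criterion {K L : Type*} [Field K] [Field L] [Algebra K L]
    [FiniteDimensional K L] [IsGalois K L] {n : ℕ} (hn : 0 < n)
    (γ : Fin n → (L ≃ₐ[K] L)) (hbij : Function.Bijective γ)
    (hid : γ ⟨0, hn⟩ = 1) (x : Fin n → L) :
    (LinearIndependent K x ∧ Submodule.span K (Set.range x) = ⊤) ↔
      Matrix.det (Matrix.of fun i j : Fin n => (γ j).symm (x i)) ≠ 0 := by
  have hcard : n = Module.finrank K L := by
    rw [← IsGalois.card_aut_eq_finrank K L, Nat.card_eq_fintype_card, ← Fintype.card_of_bijective hbij, Fintype.card_fin]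
  set M : Matrix (Fin n) (Fin n) L := Matrix.of fun i j : Fin n => (γ j).symm (x i) with hM
  constructor
  · rintro ⟨hli, hsp⟩ hdet
    obtain ⟨c, hc0, hc⟩ := Matrix.exists_mulVec_eq_zero_iff.mpr hdet
    -- ∑ j, (γ j).symm y * c j = 0 for all y
    have key : ∀ y : L, ∑ j, (γ j).symm y * c j = 0 := by
      intro y
      have hy : y ∈ Submodule.span K (Set.range x) := hsp ▸ Submodule.mem_top
      induction hy using Submodule.span_induction with
      | mem y hy =>
        obtain ⟨i, rfl⟩ := hy
        simpa [Matrix.mulVec, dotProduct, hM] using congrFun hc i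
      | zero => simp
      | add a b _ _ ha hb =>
        simp only [map_add, add_mul, Finset.sum_add_distrib, ha, hb, add_zero]
      | smul a y _ hy =>
        simp only [Algebra.smul_def, map_mul, AlgEquiv.commutes, mul_assoc,
          ← Finset.mul_sum, hy, mul_zero]
    -- linear independence of monoid homs
    have hind : LinearIndependent L
        (fun j : Fin n => ⇑(MonoidHomClass.toMonoidHom (γ j).symm : L →* L)) := by
      refine (linearIndependent_monoidHom L L).comp
        (fun j => (MonoidHomClass.toMonoidHom (γ j).symm : L →* L)) ?_
      intro i j h
      apply hbij.1
      have heq : (γ i).symm = (γ j).symm := by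
        ext y
        exact DFunLike.congr_fun h y
      calc γ i = (γ i).symm.symm := rfl
        _ = (γ j).symm.symm := by rw [heq]
        _ = γ j := rfl
    have hz := Fintype.linearIndependent_iff.mp hind c ?_
    · exact hc0 (funext hz)
    · funext y
      simpa [Finset.sum_apply, mul_comm] using key y
  · intro hdet
    have hli : LinearIndependent K x := by
      rw [Fintype.linearIndependent_iff]
      intro c hc
      have hv : Matrix.vecMul (fun i => algebraMap K L (c i)) M = 0 := by
        funext j
        have : (γ j).symm (∑ i, c i • x i) = 0 := by rw [hc, map_zero]
        simpa [Matrix.vecMul, dotProduct, hM, Algebra.smul_def] using this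
      have hz : (fun i => algebraMap K L (c i)) = 0 := by
        by_contra h
        exact hdet (Matrix.exists_vecMul_eq_zero_iff.mp ⟨_, h, hv⟩)
      intro i
      exact (algebraMap K L).injective (by simpa using congrFun hz i)
    have : Nonempty (Fin n) := ⟨⟨0, hn⟩⟩
    exact ⟨hli, hli.span_eq_top_of_card_eq_finrank (by simpa using hcard)⟩
end

section
/- Let K ⊆ L ⊆ ℂ with L/K a finite abelian extension with Galois group G. For x ∈ L, the conjugates {γ(x) : γ ∈ G} form a normal basis of L over K (i.e., a K-basis of L) if and only if for every complex character χ of G the sum Σ_{γ ∈ G} χ(γ⁻¹) γ(x) is nonzero. -/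
set_option maxHeartbeats 2000000
set_option synthInstance.maxHeartbeats 1000000
/-- Let `K ⊆ L ⊆ ℂ` with `L/K` a finite abelian extension with Galois
group `G`.  For `x ∈ L`, the conjugates `{γ(x) : γ ∈ G}` form a normal basis of `L` over
`K` iff for every complex character `χ` of `G` the sum `∑_{γ ∈ G} χ(γ⁻¹) γ(x)` is
nonzero. -/
theorem normal_basis_iff_character_sums_ne_zero (K : Subfield ℂ) (L : IntermediateField K ℂ)
    [FiniteDimensional K L] [IsGalois K L]
    (hab : ∀ σ τ : L ≃ₐ[K] L, σ * τ = τ * σ) (x : L) :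
    (LinearIndependent K (fun γ : L ≃ₐ[K] L => γ x) ∧
        Submodule.span K (Set.range fun γ : L ≃ₐ[K] L => γ x) = ⊤) ↔
      ∀ χ : (L ≃ₐ[K] L) →* ℂˣ,
        (∑ γ : L ≃ₐ[K] L, ((χ γ⁻¹ : ℂˣ) : ℂ) * ((γ x : L) : ℂ)) ≠ 0 := by
  classical
  letI : CommGroup (L ≃ₐ[K] L) :=
    { (inferInstance : Group (L ≃ₐ[K] L)) with mul_comm := hab }
  haveI : Nonempty (L ≃ₐ[K] L) := ⟨1⟩
  -- the dual group is finite of the same cardinality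
  haveI : NeZero (Monoid.exponent (L ≃ₐ[K] L)) := ⟨Monoid.exponent_ne_zero_of_finite⟩
  obtain ⟨e⟩ := CommGroup.monoidHom_mulEquiv_of_hasEnoughRootsOfUnity (L ≃ₐ[K] L) ℂ
  letI : Fintype ((L ≃ₐ[K] L) →* ℂˣ) := Fintype.ofEquiv _ e.toEquiv.symm
  have hcard : Fintype.card ((L ≃ₐ[K] L) →* ℂˣ) = Fintype.card (L ≃ₐ[K] L) :=
    Fintype.card_congr e.toEquiv
  haveI : Nonempty ((L ≃ₐ[K] L) →* ℂˣ) := ⟨1⟩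
  -- the embeddings `L → ℂ` given by the Galois group, as monoid homomorphisms
  let m : (L ≃ₐ[K] L) → (L →* ℂ) := fun δ =>
    ((L.val.comp δ.toAlgHom).toRingHom.toMonoidHom)
  have hm_inj : Function.Injective m := by
    intro δ δ' h
    ext y
    exact DFunLike.congr_fun h y
  have emb_li : LinearIndependent ℂ (fun δ : L ≃ₐ[K] L => (m δ : L → ℂ)) :=
    (linearIndependent_monoidHom L ℂ).comp m hm_inj
  -- the characters as functions `(L ≃ₐ[K] L) → ℂ`
  let u : ((L ≃ₐ[K] L) →* ℂˣ) → ((L ≃ₐ[K] L) → ℂ) := fun χ γ => ((χ γ : ℂˣ) : ℂ)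
  let j : ((L ≃ₐ[K] L) →* ℂˣ) → ((L ≃ₐ[K] L) →* ℂ) := fun χ => (Units.coeHom ℂ).comp χ
  have hj_inj : Function.Injective j := by
    intro χ χ' h
    ext γ
    exact DFunLike.congr_fun h γ
  have u_li : LinearIndependent ℂ u :=
    (linearIndependent_monoidHom (L ≃ₐ[K] L) ℂ).comp j hj_inj
  -- the translated conjugate vectors
  let a : (L ≃ₐ[K] L) → ((L ≃ₐ[K] L) → ℂ) := fun δ γ => (((γ * δ) x : L) : ℂ)
  -- the character sums
  let S : ((L ≃ₐ[K] L) →* ℂˣ) → ℂ := fun χ =>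
    ∑ τ : L ≃ₐ[K] L, ((χ τ⁻¹ : ℂˣ) : ℂ) * ((τ x : L) : ℂ)
  -- the key relation
  have hrel : ∀ χ : (L ≃ₐ[K] L) →* ℂˣ,
      ∑ δ : L ≃ₐ[K] L, ((χ δ⁻¹ : ℂˣ) : ℂ) • a δ = S χ • u χ := by
    intro χ
    funext γ
    simp only [Finset.sum_apply, Pi.smul_apply, smul_eq_mul]
    calc ∑ δ : L ≃ₐ[K] L, ((χ δ⁻¹ : ℂˣ) : ℂ) * a δ γ
        = ∑ τ : L ≃ₐ[K] L, ((χ (γ⁻¹ * τ)⁻¹ : ℂˣ) : ℂ) * a (γ⁻¹ * τ) γ := by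
          exact (Fintype.sum_equiv (Equiv.mulLeft γ⁻¹) _ _ (fun τ => rfl)).symm
      _ = ∑ τ : L ≃ₐ[K] L, ((χ γ : ℂˣ) : ℂ) * (((χ τ⁻¹ : ℂˣ) : ℂ) * ((τ x : L) : ℂ)) := by
          refine Finset.sum_congr rfl fun τ _ => ?_
          have h1 : γ * (γ⁻¹ * τ) = τ := mul_inv_cancel_left γ τ
          have h2 : (γ⁻¹ * τ)⁻¹ = τ⁻¹ * γ := by rw [mul_inv_rev, inv_inv]
          simp only [a, h1, h2, map_mul, Units.val_mul]
          ring
      _ = S χ * u χ γ := by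
          rw [← Finset.mul_sum]
          simp only [S, u]
          ring
  -- span condition implies complex linear independence of the conjugate vectors
  have P_to_Q : Submodule.span K (Set.range fun γ : L ≃ₐ[K] L => γ x) = ⊤ →
      LinearIndependent ℂ a := by
    intro hsp
    rw [Fintype.linearIndependent_iff]
    intro c hc
    have hg : ∀ y : L, y ∈ Submodule.span K (Set.range fun γ : L ≃ₐ[K] L => γ x) →
        ∑ δ : L ≃ₐ[K] L, c δ * ((δ y : L) : ℂ) = 0 := by
      intro y hy
      induction hy using Submodule.span_induction with
      | mem y hy =>
          obtain ⟨γ, rfl⟩ := hy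
          have hcγ := congrFun hc γ
          simp only [Finset.sum_apply, Pi.smul_apply, smul_eq_mul, Pi.zero_apply, a] at hcγ
          calc ∑ δ : L ≃ₐ[K] L, c δ * ((δ (γ x) : L) : ℂ)
              = ∑ δ : L ≃ₐ[K] L, c δ * (((γ * δ) x : L) : ℂ) := by
                refine Finset.sum_congr rfl fun δ _ => ?_
                rw [hab γ δ]
                rfl
            _ = 0 := hcγ
      | zero => simp
      | add y z hy hz ihy ihz =>
          simp only [map_add, AddMemClass.coe_add, mul_add, Finset.sum_add_distrib, ihy, ihz,
            add_zero]
      | smul k y hy ihy =>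
          have hks : ∀ δ : L ≃ₐ[K] L, ((δ (k • y) : L) : ℂ) = (k : ℂ) * ((δ y : L) : ℂ) := by
            intro δ
            rw [show δ (k • y) = k • δ y from δ.toLinearEquiv.map_smul k y]
            rfl
          simp only [hks]
          calc ∑ δ : L ≃ₐ[K] L, c δ * ((k : ℂ) * ((δ y : L) : ℂ))
              = (k : ℂ) * ∑ δ : L ≃ₐ[K] L, c δ * ((δ y : L) : ℂ) := by
                rw [Finset.mul_sum]; exact Finset.sum_congr rfl fun δ _ => by ring
            _ = 0 := by rw [ihy, mul_zero]
    have hfun : ∑ δ : L ≃ₐ[K] L, c δ • (m δ : L → ℂ) = 0 := by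
      funext y
      have := hg y (hsp ▸ Submodule.mem_top)
      simp only [Finset.sum_apply, Pi.smul_apply, smul_eq_mul, Pi.zero_apply]; exact this
    exact fun δ => Fintype.linearIndependent_iff.mp emb_li c hfun δ
  -- complex linear independence of the conjugate vectors implies the normal basis property
  have Q_to_P : LinearIndependent ℂ a →
      (LinearIndependent K (fun γ : L ≃ₐ[K] L => γ x) ∧
        Submodule.span K (Set.range fun γ : L ≃ₐ[K] L => γ x) = ⊤) := by
    intro hQ
    have hliK : LinearIndependent K (fun γ : L ≃ₐ[K] L => γ x) := by
      rw [Fintype.linearIndependent_iff]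
      intro c hc
      have h2 : ∀ γ0 : L ≃ₐ[K] L,
          ∑ δ : L ≃ₐ[K] L, ((c δ : K) : ℂ) * (((γ0 * δ) x : L) : ℂ) = 0 := by
        intro γ0
        have h3 : ∑ δ : L ≃ₐ[K] L, γ0 (c δ • δ x) = 0 := by
          rw [← map_sum, hc, map_zero]
        have h4 : ((∑ δ : L ≃ₐ[K] L, γ0 (c δ • δ x) : L) : ℂ) = 0 := by
          rw [h3]; rfl
        rw [AddSubmonoidClass.coe_finset_sum] at h4
        calc ∑ δ : L ≃ₐ[K] L, ((c δ : K) : ℂ) * (((γ0 * δ) x : L) : ℂ)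
            = ∑ δ : L ≃ₐ[K] L, ((γ0 (c δ • δ x) : L) : ℂ) := by
              refine Finset.sum_congr rfl fun δ _ => ?_
              rw [show γ0 (c δ • δ x) = c δ • γ0 (δ x) from γ0.toLinearEquiv.map_smul (c δ) (δ x)]
              rfl
          _ = 0 := h4
      have hQ' := Fintype.linearIndependent_iff.mp hQ (fun δ => ((c δ : K) : ℂ))
      have hz : ∑ δ : L ≃ₐ[K] L, ((c δ : K) : ℂ) • a δ = 0 := by
        funext γ0
        simpa only [Finset.sum_apply, Pi.smul_apply, smul_eq_mul, Pi.zero_apply] using h2 γ0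
      intro i
      have hi := hQ' hz i
      exact_mod_cast hi
    refine ⟨hliK, ?_⟩
    have hcard2 : Fintype.card (L ≃ₐ[K] L) = Module.finrank K L :=
      (Nat.card_eq_fintype_card (α := L ≃ₐ[K] L)).symm.trans (IsGalois.card_aut_eq_finrank K L)
    have hb := coe_basisOfLinearIndependentOfCardEqFinrank hliK hcard2
    have hsp := (basisOfLinearIndependentOfCardEqFinrank hliK hcard2).span_eq
    rwa [hb] at hsp
  -- complex linear independence implies all character sums are nonzero
  have Q_to_R : LinearIndependent ℂ a → ∀ χ : (L ≃ₐ[K] L) →* ℂˣ, S χ ≠ 0 := by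
    intro hQ χ hS0
    have h := hrel χ
    rw [hS0, zero_smul] at h
    have h1 := Fintype.linearIndependent_iff.mp hQ _ h 1
    simp only [inv_one, map_one, Units.val_one] at h1
    exact one_ne_zero h1
  -- all character sums nonzero implies complex linear independence
  have R_to_Q : (∀ χ : (L ≃ₐ[K] L) →* ℂˣ, S χ ≠ 0) → LinearIndependent ℂ a := by
    intro hR
    have hbspan : Submodule.span ℂ (Set.range u) = ⊤ := by
      have hcard3 : Fintype.card ((L ≃ₐ[K] L) →* ℂˣ) =
          Module.finrank ℂ ((L ≃ₐ[K] L) → ℂ) := by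
        rw [hcard, Module.finrank_fintype_fun_eq_card]
      have hb := coe_basisOfLinearIndependentOfCardEqFinrank u_li hcard3
      have hsp := (basisOfLinearIndependentOfCardEqFinrank u_li hcard3).span_eq
      rwa [hb] at hsp
    have hspan : ⊤ ≤ Submodule.span ℂ (Set.range a) := by
      rw [← hbspan]
      refine Submodule.span_le.mpr ?_
      rintro _ ⟨χ, rfl⟩
      have hu : u χ = (S χ)⁻¹ • ∑ δ : L ≃ₐ[K] L, ((χ δ⁻¹ : ℂˣ) : ℂ) • a δ := by
        rw [hrel χ, smul_smul, inv_mul_cancel₀ (hR χ), one_smul]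
      rw [hu]
      exact Submodule.smul_mem _ _ (Submodule.sum_mem _ fun δ _ =>
        Submodule.smul_mem _ _ (Submodule.subset_span ⟨δ, rfl⟩))
    exact linearIndependent_of_top_le_span_of_card_eq_finrank hspan
      (by rw [Module.finrank_fintype_fun_eq_card])
  constructor
  · rintro ⟨-, hsp⟩ χ
    exact Q_to_R (P_to_Q hsp) χ
  · intro hR
    exact Q_to_P (R_to_Q hR)
end

section
/- Let K ⊆ L ⊆ ℂ with L/K a finite abelian extension with Galois group G. Suppose x ∈ L satisfies |γ(x)/x| < 1 for every γ ∈ G with γ ≠ id (in particular x ≠ 0). Then there exists a positive integer m such that the conjugates {γ(xᵐ) : γ ∈ G} form a normal basis of L over K. -/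
set_option synthInstance.maxHeartbeats 1000000
set_option maxHeartbeats 2000000

open Filter Topology

/-- Let `K ⊆ L ⊆ ℂ` with `L/K` a finite abelian extension with Galois
group `G`.  If `x ∈ L` satisfies `|γ(x)/x| < 1` for every `γ ≠ id` (in particular
`x ≠ 0`), then for some positive integer `m` the conjugates of `x ^ m` form a normal
basis of `L` over `K`. -/
theorem normal_basis_of_small_conjugates (K : Subfield ℂ) (L : IntermediateField K ℂ)
    [FiniteDimensional K L] [IsGalois K L]
    (hab : ∀ σ τ : L ≃ₐ[K] L, σ * τ = τ * σ)
    (x : L) (hx : x ≠ 0)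
    (hsmall : ∀ γ : L ≃ₐ[K] L, γ ≠ 1 → ‖((γ x : L) : ℂ) / ((x : L) : ℂ)‖ < 1) :
    ∃ m : ℕ, 0 < m ∧
      LinearIndependent K (fun γ : L ≃ₐ[K] L => γ (x ^ m)) ∧
      Submodule.span K (Set.range fun γ : L ≃ₐ[K] L => γ (x ^ m)) = ⊤ := by
  classical
  haveI : Fintype (L ≃ₐ[K] L) := AlgEquiv.fintype K L
  haveI : DecidableEq (L ≃ₐ[K] L) := Classical.decEq _
  have hxC : ((x : L) : ℂ) ≠ 0 := by
    simpa using (Subtype.coe_injective.ne_iff.2 hx : ((x : L) : ℂ) ≠ ((0 : L) : ℂ))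
  set r : (L ≃ₐ[K] L) → ℂ := fun γ => ((γ x : L) : ℂ) / ((x : L) : ℂ) with hrdef
  have hr1 : r 1 = 1 := by
    simp only [hrdef, AlgEquiv.one_apply]
    exact div_self hxC
  have hrlt : ∀ γ : L ≃ₐ[K] L, γ ≠ 1 → ‖r γ‖ < 1 := by
    intro γ h
    simp only [hrdef]
    exact hsmall γ h
  -- the limiting permutation matrix
  set P : Matrix (L ≃ₐ[K] L) (L ≃ₐ[K] L) ℂ :=
    Matrix.of (fun σ τ => if σ * τ = 1 then (1 : ℂ) else 0) with hPdef
  have hPP : P * P = 1 := by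
    ext σ τ
    simp only [Matrix.mul_apply, hPdef, Matrix.of_apply, Matrix.one_apply]
    rw [Finset.sum_eq_single τ⁻¹]
    · by_cases h : σ = τ <;> simp [h, mul_inv_eq_one, eq_comm]
    · intro ρ _ hρ
      have : ¬ ρ * τ = 1 := fun hc => hρ (mul_eq_one_iff_eq_inv.1 hc)
      simp [this]
    · simp
  have hPdet : P.det ≠ 0 := by
    intro h0
    have h1 : P.det * P.det = 1 := by rw [← Matrix.det_mul, hPP, Matrix.det_one]
    rw [h0, mul_zero] at h1
    exact zero_ne_one h1
  -- the normalized matrices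
  set B : ℕ → Matrix (L ≃ₐ[K] L) (L ≃ₐ[K] L) ℂ :=
    fun m => Matrix.of (fun σ τ => (r (σ * τ)) ^ m) with hBdef
  have hBtend : Tendsto B atTop (𝓝 P) := by
    refine tendsto_pi_nhds.2 ?_
    intro σ
    rw [tendsto_pi_nhds]
    intro τ
    by_cases h : σ * τ = 1
    · simp only [hBdef, Matrix.of_apply, h, hr1, one_pow, hPdef]
      simpa [h] using tendsto_const_nhds (x := (1 : ℂ)) (f := atTop (α := ℕ))
    · have := tendsto_pow_atTop_nhds_zero_of_norm_lt_one (hrlt _ h)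
      simpa [hBdef, hPdef, h] using this
  have hdet_tend : Tendsto (fun m => (B m).det) atTop (𝓝 P.det) :=
    ((continuous_id.matrix_det).tendsto P).comp hBtend
  obtain ⟨m, hm1, hmdet⟩ := ((eventually_ge_atTop 1).and (hdet_tend.eventually_ne hPdet)).exists
  have hli : LinearIndependent K (fun γ : L ≃ₐ[K] L => γ (x ^ m)) := by
    have hCdet : (Matrix.of (fun σ τ : L ≃ₐ[K] L => (((σ * τ) (x ^ m) : L) : ℂ))).det ≠ 0 := by
      have hentry : (Matrix.of (fun σ τ : L ≃ₐ[K] L => (((σ * τ) (x ^ m) : L) : ℂ)))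
          = (((x : L) : ℂ) ^ m) • B m := by
        ext σ τ
        simp only [Matrix.of_apply, Matrix.smul_apply, hBdef, smul_eq_mul]
        rw [map_pow]
        push_cast
        rw [hrdef]
        rw [div_pow, mul_div_assoc', mul_div_cancel_left₀ _ (pow_ne_zero _ hxC)]
      rw [hentry, Matrix.det_smul]
      exact mul_ne_zero (pow_ne_zero _ (pow_ne_zero _ hxC)) hmdet
    rw [Fintype.linearIndependent_iff]
    intro g hg γ₀
    set v : (L ≃ₐ[K] L) → ℂ := fun γ => ((g γ : K) : ℂ) with hvdef
    have hv : (Matrix.of (fun σ τ : L ≃ₐ[K] L => (((σ * τ) (x ^ m) : L) : ℂ))).mulVec v = 0 := by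
      funext σ
      have h1 : σ (∑ γ, g γ • γ (x ^ m)) = 0 := by rw [hg]; exact map_zero σ
      rw [map_sum] at h1
      have h2 : (((∑ γ, σ (g γ • γ (x ^ m)) : L)) : ℂ) = 0 := by rw [h1]; rfl
      push_cast at h2
      calc (Matrix.of (fun σ τ : L ≃ₐ[K] L => (((σ * τ) (x ^ m) : L) : ℂ))).mulVec v σ
          = ∑ γ, (((σ * γ) (x ^ m) : L) : ℂ) * v γ := rfl
        _ = ∑ γ, ((σ ((g γ : K) • γ (x ^ m)) : L) : ℂ) := by
            refine Finset.sum_congr rfl fun γ _ => ?_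
            rw [show σ ((g γ : K) • γ (x ^ m)) = (g γ : K) • σ (γ (x ^ m)) from map_smul σ.toLinearEquiv _ _]
            have : ((((g γ : K) • σ (γ (x ^ m)) : L)) : ℂ)
                = ((g γ : K) : ℂ) * ((σ (γ (x ^ m)) : L) : ℂ) := by
              have : ((((g γ : K) • σ (γ (x ^ m)) : L)) : ℂ)
                  = (g γ : K) • ((σ (γ (x ^ m)) : L) : ℂ) := rfl
              rw [this, Subfield.smul_def]
              exact smul_eq_mul _ _
            rw [this, hvdef]
            rw [AlgEquiv.mul_apply]
            ring
        _ = 0 := by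
            rw [← h2]
      done
    have hv0 : v = 0 := Matrix.eq_zero_of_mulVec_eq_zero hCdet hv
    have h3 : ((g γ₀ : K) : ℂ) = 0 := by
      have := congrFun hv0 γ₀
      simpa [hvdef] using this
    exact Subtype.coe_injective (by simpa using h3)
  refine ⟨m, hm1, hli, ?_⟩
  have hcard : Fintype.card (L ≃ₐ[K] L) = Module.finrank K L := by
    have h := IsGalois.card_aut_eq_finrank K L
    convert h using 2
    exact Fintype.card_eq_nat_card
  have hb : ⇑(basisOfLinearIndependentOfCardEqFinrank hli hcard)
      = fun γ : L ≃ₐ[K] L => γ (x ^ m) :=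
    coe_basisOfLinearIndependentOfCardEqFinrank hli hcard
  rw [← hb]
  exact (basisOfLinearIndependentOfCardEqFinrank hli hcard).span_eq
end

section
/- Let K ⊆ L ⊆ ℂ with L/K a finite abelian extension with Galois group G of order n. Suppose x ∈ L is nonzero and satisfies |γ(x)/x| ≤ 1/n for every γ ∈ G with γ ≠ id. Then for every complex character χ of G one has |Σ_{γ ∈ G} χ(γ⁻¹) γ(x)| ≥ |x|/n > 0; consequently the conjugates {γ(x) : γ ∈ G} form a normal basis of L over K. -/
set_option synthInstance.maxHeartbeats 1000000
set_option maxHeartbeats 2000000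

/-- Let `K ⊆ L ⊆ ℂ` with `L/K` a finite abelian extension with Galois
group `G` of order `n`.  If `x ∈ L` is nonzero and `|γ(x)/x| ≤ 1/n` for every `γ ≠ id`,
then for every complex character `χ` of `G` one has
`|∑_{γ ∈ G} χ(γ⁻¹) γ(x)| ≥ |x|/n > 0`; consequently the conjugates of `x` form a normal
basis of `L` over `K`. -/
theorem normal_basis_of_conjugates_le_inv_card (K : Subfield ℂ) (L : IntermediateField K ℂ)
    [FiniteDimensional K L] [IsGalois K L]
    (hab : ∀ σ τ : L ≃ₐ[K] L, σ * τ = τ * σ)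
    (n : ℕ) (hn : Fintype.card (L ≃ₐ[K] L) = n)
    (x : L) (hx : x ≠ 0)
    (hsmall : ∀ γ : L ≃ₐ[K] L, γ ≠ 1 →
      ‖((γ x : L) : ℂ) / ((x : L) : ℂ)‖ ≤ 1 / n) :
    (∀ χ : (L ≃ₐ[K] L) →* ℂˣ,
        ‖((x : L) : ℂ)‖ / n ≤
          ‖∑ γ : L ≃ₐ[K] L, ((χ γ⁻¹ : ℂˣ) : ℂ) * ((γ x : L) : ℂ)‖ ∧
        0 < ‖((x : L) : ℂ)‖ / n) ∧
      LinearIndependent K (fun γ : L ≃ₐ[K] L => γ x) ∧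
      Submodule.span K (Set.range fun γ : L ≃ₐ[K] L => γ x) = ⊤ := by
  letI : DecidableEq (L ≃ₐ[K] L) := Classical.decEq _
  have hn0 : 0 < n := hn ▸ Fintype.card_pos
  have hnR : (0:ℝ) < n := by exact_mod_cast hn0
  have hxC : ((x : L) : ℂ) ≠ 0 := fun h => hx (by exact_mod_cast h)
  have hxpos : 0 < ‖((x : L) : ℂ)‖ := norm_pos_iff.mpr hxC
  have hcast : ((n - 1 : ℕ) : ℝ) = (n : ℝ) - 1 := by
    rw [Nat.cast_sub hn0]; simp
  -- key bound on conjugates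
  have h1 : ∀ γ : L ≃ₐ[K] L, γ ≠ 1 →
      ‖((γ x : L) : ℂ)‖ ≤ ‖((x : L) : ℂ)‖ / n := by
    intro γ hγ
    have h := hsmall γ hγ
    rw [norm_div, div_le_div_iff₀ hxpos hnR] at h
    rw [le_div_iff₀ hnR]
    linarith
  -- character part
  have hchar : ∀ χ : (L ≃ₐ[K] L) →* ℂˣ,
      ‖((x : L) : ℂ)‖ / n ≤
        ‖∑ γ : L ≃ₐ[K] L, ((χ γ⁻¹ : ℂˣ) : ℂ) * ((γ x : L) : ℂ)‖ ∧
      0 < ‖((x : L) : ℂ)‖ / n := by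
    intro χ
    refine ⟨?_, div_pos hxpos hnR⟩
    have hχ : ∀ γ : L ≃ₐ[K] L, ‖((χ γ : ℂˣ) : ℂ)‖ = 1 := by
      intro γ
      have hp : (((χ γ : ℂˣ) : ℂ)) ^ n = 1 := by
        rw [← Units.val_pow_eq_pow_val, ← map_pow, ← hn, pow_card_eq_one]
        simp
      have := Complex.norm_eq_one_of_pow_eq_one hp hn0.ne'
      exact this
    set S : ℂ := ∑ γ ∈ Finset.univ.erase (1 : L ≃ₐ[K] L),
        ((χ γ⁻¹ : ℂˣ) : ℂ) * ((γ x : L) : ℂ) with hSdef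
    have hsum : ∑ γ : L ≃ₐ[K] L, ((χ γ⁻¹ : ℂˣ) : ℂ) * ((γ x : L) : ℂ)
        = ((x : L) : ℂ) + S := by
      rw [← Finset.add_sum_erase _ (fun γ : L ≃ₐ[K] L => ((χ γ⁻¹ : ℂˣ) : ℂ) * ((γ x : L) : ℂ))
        (Finset.mem_univ (1 : L ≃ₐ[K] L)), ← hSdef]
      simp only [inv_one, map_one, Units.val_one, one_mul, AlgEquiv.one_apply]
    have hS : ‖S‖ ≤ ((n : ℝ) - 1) * (‖((x : L) : ℂ)‖ / n) := by
      calc ‖S‖ ≤ ∑ γ ∈ Finset.univ.erase (1 : L ≃ₐ[K] L),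
            ‖((χ γ⁻¹ : ℂˣ) : ℂ) * ((γ x : L) : ℂ)‖ :=
          norm_sum_le _ _
        _ ≤ ∑ _γ ∈ Finset.univ.erase (1 : L ≃ₐ[K] L),
            ‖((x : L) : ℂ)‖ / n := by
          refine Finset.sum_le_sum fun γ hγ => ?_
          rw [norm_mul, hχ, one_mul]
          exact h1 γ (Finset.ne_of_mem_erase hγ)
        _ = ((n : ℝ) - 1) * (‖((x : L) : ℂ)‖ / n) := by
          rw [Finset.sum_const, Finset.card_erase_of_mem (Finset.mem_univ _),
            Finset.card_univ, hn, nsmul_eq_mul, hcast]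
    have htri : ‖((x : L) : ℂ)‖ ≤
        ‖((x : L) : ℂ) + S‖ + ‖S‖ := by
      have := norm_add_le (((x : L) : ℂ) + S) (-S)
      simpa using this
    rw [hsum]
    have hid : ((n : ℝ) - 1) * (‖((x : L) : ℂ)‖ / n)
        = ‖((x : L) : ℂ)‖ - ‖((x : L) : ℂ)‖ / n := by
      field_simp
    linarith
  -- linear independence
  have hli : LinearIndependent K (fun γ : L ≃ₐ[K] L => γ x) := by
    rw [Fintype.linearIndependent_iff]
    intro c hc
    by_contra hex
    push_neg at hex
    obtain ⟨i, hi⟩ := hex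
    obtain ⟨γ₀, -, hγ₀⟩ := Finset.exists_max_image Finset.univ
      (fun γ => ‖(c γ : ℂ)‖) ⟨i, Finset.mem_univ i⟩
    set M : ℝ := ‖(c γ₀ : ℂ)‖ with hMdef
    have hiC : ((c i : ℂ)) ≠ 0 := fun h => hi (by exact_mod_cast h)
    have hM : 0 < M := lt_of_lt_of_le (norm_pos_iff.mpr hiC) (hγ₀ i (Finset.mem_univ i))
    have hc2 : ∑ γ : L ≃ₐ[K] L, c γ • ((γ₀⁻¹ : L ≃ₐ[K] L) (γ x)) = 0 := by
      have h := congrArg (γ₀⁻¹ : L ≃ₐ[K] L) hc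
      rw [map_sum, map_zero] at h
      simpa only [Algebra.smul_def, map_mul, AlgEquiv.commutes] using h
    have hc3 : ∑ γ : L ≃ₐ[K] L, ((c γ : ℂ)) * ((((γ₀⁻¹ : L ≃ₐ[K] L) (γ x) : L)) : ℂ) = 0 := by
      have h := congrArg (fun y : L => (y : ℂ)) hc2
      push_cast at h
      convert h using 2
      rfl
    have hsplit : ((c γ₀ : ℂ)) * ((x : L) : ℂ)
        = -∑ γ ∈ Finset.univ.erase γ₀, ((c γ : ℂ)) * ((((γ₀⁻¹ : L ≃ₐ[K] L) (γ x) : L)) : ℂ) := by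
      have hadd := Finset.add_sum_erase Finset.univ
        (fun γ => ((c γ : ℂ)) * ((((γ₀⁻¹ : L ≃ₐ[K] L) (γ x) : L)) : ℂ)) (Finset.mem_univ γ₀)
      rw [hc3] at hadd
      have hfix : (γ₀⁻¹ : L ≃ₐ[K] L) (γ₀ x) = x := by
        rw [← AlgEquiv.mul_apply, inv_mul_cancel, AlgEquiv.one_apply]
      rw [hfix] at hadd
      exact eq_neg_of_add_eq_zero_left hadd
    have hbound : M * ‖((x : L) : ℂ)‖
        ≤ ((n : ℝ) - 1) * (M * (‖((x : L) : ℂ)‖ / n)) := by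
      calc M * ‖((x : L) : ℂ)‖
          = ‖((c γ₀ : ℂ)) * ((x : L) : ℂ)‖ := (norm_mul _ _).symm
        _ = ‖∑ γ ∈ Finset.univ.erase γ₀,
              ((c γ : ℂ)) * ((((γ₀⁻¹ : L ≃ₐ[K] L) (γ x) : L)) : ℂ)‖ := by
            rw [hsplit, norm_neg]
        _ ≤ ∑ γ ∈ Finset.univ.erase γ₀,
              ‖((c γ : ℂ)) * ((((γ₀⁻¹ : L ≃ₐ[K] L) (γ x) : L)) : ℂ)‖ :=
            norm_sum_le _ _
        _ ≤ ∑ _γ ∈ Finset.univ.erase γ₀, M * (‖((x : L) : ℂ)‖ / n) := by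
            refine Finset.sum_le_sum fun γ hγ => ?_
            rw [norm_mul]
            have hne : (γ₀⁻¹ * γ : L ≃ₐ[K] L) ≠ 1 := by
              intro h
              exact Finset.ne_of_mem_erase hγ (by
                have := congrArg (fun σ => γ₀ * σ) h
                simpa [mul_assoc] using this)
            have := h1 (γ₀⁻¹ * γ) hne
            rw [AlgEquiv.mul_apply] at this
            exact mul_le_mul (hγ₀ γ (Finset.mem_univ γ)) this (norm_nonneg _) hM.le
        _ = ((n : ℝ) - 1) * (M * (‖((x : L) : ℂ)‖ / n)) := by
            rw [Finset.sum_const, Finset.card_erase_of_mem (Finset.mem_univ _),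
              Finset.card_univ, hn, nsmul_eq_mul, hcast]
    have hid : ((n : ℝ) - 1) * (M * (‖((x : L) : ℂ)‖ / n))
        = M * ‖((x : L) : ℂ)‖ - M * ‖((x : L) : ℂ)‖ / n := by
      field_simp
    have hpos : 0 < M * ‖((x : L) : ℂ)‖ / n := by positivity
    linarith
  have hcard : Fintype.card (L ≃ₐ[K] L) = Module.finrank K L :=
    by rw [← Nat.card_eq_fintype_card]; exact IsGalois.card_aut_eq_finrank K L
  exact ⟨hchar, hli, hli.span_eq_top_of_card_eq_finrank hcard⟩
end

section
/- Let d_K ≤ −7 be the discriminant of an imaginary quadratic field, let θ = √d_K/2 if d_K ≡ 0 (mod 4) and θ = (−1+√d_K)/2 if d_K ≡ 1 (mod 4), and let Q = aX² + bXY + cY² be a reduced quadratic form of discriminant d_K with a = 1, with θ_Q = (−b+√d_K)/2. Then for every integer N ≥ 2 and every integer t with t ≢ 0, 1, −1 (mod N), one has |g_{(0, t/N)}(θ_Q)⁻¹ / g_{(0, 1/N)}(θ)⁻¹| < 1, i.e. |g_{(0,1/N)}(θ)| < |g_{(0,t/N)}(θ_Q)|. -/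
/-- The `n`-th factor (for `n = 1, 2, …`, indexed here by `ℕ` via `n ↦ n + 1`) of the
infinite product defining the Siegel function:
`(1 − q_τ^{n+1} q_z)(1 − q_τ^{n+1} q_z⁻¹)` with `q_τ = e^{2πiτ}`, `q_z = e^{2πiz}`,
`z = r₁ τ + r₂`. -/
noncomputable def siegelTerm (r₁ r₂ : ℚ) (τ : ℂ) (n : ℕ) : ℂ :=
  (1 - Complex.exp (2 * Real.pi * Complex.I * τ) ^ (n + 1) *
      Complex.exp (2 * Real.pi * Complex.I * ((r₁ : ℂ) * τ + (r₂ : ℂ)))) *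
  (1 - Complex.exp (2 * Real.pi * Complex.I * τ) ^ (n + 1) *
      (Complex.exp (2 * Real.pi * Complex.I * ((r₁ : ℂ) * τ + (r₂ : ℂ))))⁻¹)

/-- The Siegel function
`g_{(r₁,r₂)}(τ) = −q_τ^{(1/2)B₂(r₁)} e^{πi r₂(r₁−1)} (1−q_z) ∏_{n≥1} (1−q_τⁿq_z)(1−q_τⁿq_z⁻¹)`,
where `B₂(X) = X² − X + 1/6`, `q_τ^{(1/2)B₂(r₁)} = e^{πi B₂(r₁) τ}`, and `z = r₁τ + r₂`. -/
noncomputable def siegel (r₁ r₂ : ℚ) (τ : ℂ) : ℂ :=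
  -Complex.exp (Real.pi * Complex.I * ((r₁ : ℂ) ^ 2 - (r₁ : ℂ) + 1 / 6) * τ) *
    Complex.exp (Real.pi * Complex.I * (r₂ : ℂ) * ((r₁ : ℂ) - 1)) *
    (1 - Complex.exp (2 * Real.pi * Complex.I * ((r₁ : ℂ) * τ + (r₂ : ℂ)))) *
    ∏' n : ℕ, siegelTerm r₁ r₂ τ n

/-- `d` is the discriminant of an imaginary quadratic field iff `d < 0` and `d` is a
fundamental discriminant: either `d ≡ 1 (mod 4)` and `d` is squarefree, or `d = 4m` with
`m` squarefree and `m ≡ 2, 3 (mod 4)`. -/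
def IsImagQuadDisc (d : ℤ) : Prop :=
  d < 0 ∧
    ((d % 4 = 1 ∧ Squarefree d) ∨
      (d % 4 = 0 ∧ Squarefree (d / 4) ∧ (d / 4 % 4 = 2 ∨ d / 4 % 4 = 3)))

/-- The standard generator `θ` of the ring of integers of the imaginary quadratic field
of discriminant `d`: `θ = √d/2` if `d ≡ 0 (mod 4)` and `θ = (−1+√d)/2` if
`d ≡ 1 (mod 4)`, where `√d = i√(−d)` has positive imaginary part. -/
noncomputable def thetaOf (d : ℤ) : ℂ :=
  if d % 4 = 0 then Complex.I * Real.sqrt (-d) / 2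
  else (-1 + Complex.I * Real.sqrt (-d)) / 2


namespace SiegelAux
open Real


lemma sin_bound_aux (n mm : ℝ) (hn : 0 < n) (h2 : 2 ≤ mm) (hh : 2*mm ≤ n) :
    Real.sin (2*(π/n)) ≤ Real.sin (π*mm/n) := by
  apply Real.sin_le_sin_of_le_of_le_pi_div_two
  · have hp := Real.pi_pos
    have h := div_pos hp hn
    linarith
  · rw [div_le_div_iff₀ hn (by norm_num : (0:ℝ) < 2)]
    nlinarith [Real.pi_pos]
  · have h : 2*(π/n) = (2*π)/n := by ring
    rw [h, div_le_div_iff₀ hn hn]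
    nlinarith [Real.pi_pos, mul_nonneg (sub_nonneg.mpr h2) (mul_pos Real.pi_pos hn).le]


lemma abs_one_sub_exp (θ : ℝ) :
    ‖1 - Complex.exp (θ * Complex.I)‖ = 2 * |Real.sin (θ / 2)| := by
  rw [Complex.exp_mul_I]
  have h1 : (1 - ((θ:ℂ).cos + (θ:ℂ).sin * Complex.I)) =
      Complex.mk (1 - Real.cos θ) (-Real.sin θ) := by
    apply Complex.ext <;>
      simp [Complex.cos_ofReal_re, Complex.sin_ofReal_re, Complex.sub_re, Complex.sub_im]
  rw [h1, Complex.norm_def, Complex.normSq_mk]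
  have h2 : (1 - Real.cos θ) * (1 - Real.cos θ) + -Real.sin θ * -Real.sin θ
      = (2 * |Real.sin (θ/2)|)^2 := by
    have hs := Real.sin_sq_eq_half_sub (θ/2)
    have hc : 2 * (θ/2) = θ := by ring
    rw [hc] at hs
    have h3 := Real.sin_sq_add_cos_sq θ
    have h4 : |Real.sin (θ/2)|^2 = Real.sin (θ/2)^2 := sq_abs _
    nlinarith
  rw [h2, Real.sqrt_sq (by positivity)]

lemma prod_one_sub_ge (s : Finset ℕ) (δ : ℕ → ℝ) (h0 : ∀ n, 0 ≤ δ n) (h1 : ∀ n, δ n ≤ 1) :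
    1 - ∑ n ∈ s, δ n ≤ ∏ n ∈ s, (1 - δ n) := by
  classical
  induction s using Finset.induction with
  | empty => simp
  | @insert a s hx ih =>
    rw [Finset.prod_insert hx, Finset.sum_insert hx]
    have hs : 0 ≤ ∑ n ∈ s, δ n := Finset.sum_nonneg fun n _ => h0 n
    nlinarith [h0 a, h1 a, Finset.prod_nonneg
      (fun n (_ : n ∈ s) => by linarith [h0 n, h1 n] : ∀ n ∈ s, (0:ℝ) ≤ 1 - δ n)]

lemma tprod_abs_bounds (f : ℕ → ℂ) (ε : ℝ) (hε0 : 0 ≤ ε) (hε : ε ≤ 1/64)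
    (hf : ∀ n, ‖f n - 1‖ ≤ 3 * ε ^ (n + 1)) :
    1 - 3 * ε / (1 - ε) ≤ ‖∏' n, f n‖ ∧
      ‖∏' n, f n‖ ≤ Real.exp (3 * ε / (1 - ε)) := by
  set S := 3 * ε / (1 - ε) with hS
  have hε1 : ε < 1 := by linarith
  have hS0 : 0 ≤ S := div_nonneg (by positivity) (by linarith)
  have hsum : Summable (fun n : ℕ => 3 * ε ^ (n + 1)) := by
    simpa [pow_succ, mul_comm, mul_assoc, mul_left_comm] using
      ((summable_geometric_of_lt_one hε0 hε1).mul_left (3 * ε))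
  have htsum : ∑' n : ℕ, 3 * ε ^ (n + 1) = S := by
    have h : (fun n : ℕ => 3 * ε ^ (n + 1)) = fun n : ℕ => (3 * ε) * ε ^ n := by
      funext n; ring
    rw [h, tsum_mul_left, tsum_geometric_of_lt_one hε0 hε1, hS]
    field_simp
  have key : ∀ s : Finset ℕ, ∑ n ∈ s, 3 * ε ^ (n + 1) ≤ S := by
    intro s
    rw [← htsum]
    exact Summable.sum_le_tsum s (fun n _ => by positivity) hsum
  have hδ1 : ∀ n : ℕ, 3 * ε ^ (n + 1) ≤ 1 := by
    intro n
    have h : ε ^ (n+1) ≤ ε ^ 1 := pow_le_pow_of_le_one hε0 (le_of_lt hε1) (by omega)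
    simp at h; nlinarith
  have upper : ∀ s : Finset ℕ, ‖∏ n ∈ s, f n‖ ≤ Real.exp S := by
    intro s
    rw [norm_prod]
    calc ∏ n ∈ s, ‖f n‖ ≤ ∏ n ∈ s, Real.exp (3 * ε ^ (n + 1)) := by
          apply Finset.prod_le_prod (fun n _ => by positivity)
          intro n _
          calc ‖f n‖ = ‖1 + (f n - 1)‖ := by ring_nf
            _ ≤ 1 + ‖f n - 1‖ := by
                simpa using norm_add_le 1 (f n - 1)
            _ ≤ 1 + 3 * ε ^ (n + 1) := by linarith [hf n]
            _ ≤ Real.exp (3 * ε ^ (n + 1)) := by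
                simpa [add_comm] using Real.add_one_le_exp (3 * ε ^ (n + 1))
      _ = Real.exp (∑ n ∈ s, 3 * ε ^ (n + 1)) := by rw [Real.exp_sum]
      _ ≤ Real.exp S := Real.exp_le_exp.2 (key s)
  have lower : ∀ s : Finset ℕ, 1 - S ≤ ‖∏ n ∈ s, f n‖ := by
    intro s
    rw [norm_prod]
    calc (1:ℝ) - S ≤ 1 - ∑ n ∈ s, 3 * ε ^ (n + 1) := by linarith [key s]
      _ ≤ ∏ n ∈ s, (1 - 3 * ε ^ (n + 1)) :=
          prod_one_sub_ge s _ (fun n => by positivity) hδ1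
      _ ≤ ∏ n ∈ s, ‖f n‖ := by
          apply Finset.prod_le_prod (fun n _ => by linarith [hδ1 n])
          intro n _
          have h2 := norm_sub_norm_le (1:ℂ) (1 - f n)
          have h3 : (1 : ℂ) - (1 - f n) = f n := by ring
          rw [h3, norm_one] at h2
          have h4 : ‖1 - f n‖ = ‖f n - 1‖ :=
            norm_sub_rev 1 (f n)
          linarith [hf n]
  by_cases hm : Multipliable f
  · have hp := hm.hasProd
    have ht : Filter.Tendsto (fun s : Finset ℕ => ‖∏ n ∈ s, f n‖)
        Filter.atTop (nhds (‖∏' n, f n‖)) :=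
      (continuous_norm.continuousAt).tendsto.comp hp
    exact ⟨ge_of_tendsto' ht lower, le_of_tendsto' ht upper⟩
  · rw [tprod_eq_one_of_not_multipliable hm]
    simp only [norm_one]
    exact ⟨by linarith, by simpa using Real.one_le_exp hS0⟩

lemma abs_exp_I_mul (r : ℝ) (τ : ℂ) :
    ‖Complex.exp ((r:ℂ) * Complex.I * τ)‖ = Real.exp (-(r * τ.im)) := by
  rw [Complex.norm_exp]
  congr 1
  simp [Complex.mul_re, Complex.mul_im]

lemma abs_exp_real_mul_I (r : ℝ) : ‖Complex.exp ((r : ℂ) * Complex.I)‖ = 1 := by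
  rw [Complex.norm_exp]
  simp

lemma siegelTerm_bound (x : ℚ) (τ : ℂ) (n : ℕ) (ε : ℝ)
    (hq : ‖Complex.exp (2 * Real.pi * Complex.I * τ)‖ = ε) (hε : ε ≤ 1) :
    ‖siegelTerm 0 x τ n - 1‖ ≤ 3 * ε ^ (n + 1) := by
  have hε0 : 0 ≤ ε := hq ▸ norm_nonneg _
  set q : ℂ := Complex.exp (2 * Real.pi * Complex.I * τ) with hqdef
  set ζ : ℂ := Complex.exp (2 * Real.pi * Complex.I * (((0:ℚ) : ℂ) * τ + ((x:ℚ) : ℂ)))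
    with hζdef
  have hζ0 : ζ ≠ 0 := Complex.exp_ne_zero _
  have habsζ : ‖ζ‖ = 1 := by
    rw [hζdef]
    have h : 2 * (Real.pi:ℂ) * Complex.I * (((0:ℚ) : ℂ) * τ + ((x:ℚ) : ℂ))
        = ((2 * Real.pi * (x:ℝ) : ℝ) : ℂ) * Complex.I := by
      push_cast; ring
    rw [h, abs_exp_real_mul_I]
  have hexp : siegelTerm 0 x τ n - 1
      = -(q^(n+1) * ζ) + (-(q^(n+1) * ζ⁻¹) + ((q^(n+1))^2 * (ζ * ζ⁻¹))) := by
    rw [siegelTerm]; ring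
  rw [hexp, mul_inv_cancel₀ hζ0, mul_one]
  have habsq : ‖q^(n+1)‖ = ε^(n+1) := by rw [norm_pow, hq]
  calc ‖-(q^(n+1) * ζ) + (-(q^(n+1) * ζ⁻¹) + (q^(n+1))^2)‖
      ≤ ‖-(q^(n+1) * ζ)‖ + ‖-(q^(n+1) * ζ⁻¹) + (q^(n+1))^2‖ :=
        norm_add_le _ _
    _ ≤ ‖-(q^(n+1) * ζ)‖ +
        (‖-(q^(n+1) * ζ⁻¹)‖ + ‖(q^(n+1))^2‖) := by
        linarith [norm_add_le (-(q^(n+1) * ζ⁻¹)) ((q^(n+1))^2)]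
    _ = ε^(n+1) * 1 + (ε^(n+1) * 1 + (ε^(n+1))^2) := by
        rw [norm_neg, norm_neg, norm_mul, norm_mul, norm_inv, habsζ,
          inv_one, habsq, norm_pow, habsq]
    _ ≤ 3 * ε ^ (n + 1) := by
        have h1 : (ε^(n+1))^2 ≤ ε^(n+1) * 1 := by
          have : ε^(n+1) ≤ 1 := pow_le_one₀ hε0 hε
          nlinarith [pow_nonneg hε0 (n+1)]
        nlinarith [pow_nonneg hε0 (n+1)]

lemma abs_siegel_zero (x : ℚ) (τ : ℂ) :
    ‖siegel 0 x τ‖ =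
      Real.exp (-(Real.pi / 6 * τ.im)) * (2 * |Real.sin (Real.pi * (x:ℝ))|) *
        ‖∏' n, siegelTerm 0 x τ n‖ := by
  rw [siegel]
  rw [norm_mul, norm_mul, norm_mul, norm_neg]
  have h1 : ‖Complex.exp (Real.pi * Complex.I *
      (((0:ℚ):ℂ) ^ 2 - ((0:ℚ):ℂ) + 1 / 6) * τ)‖ = Real.exp (-(Real.pi / 6 * τ.im)) := by
    have h : (Real.pi:ℂ) * Complex.I * (((0:ℚ):ℂ) ^ 2 - ((0:ℚ):ℂ) + 1 / 6) * τ
        = ((Real.pi / 6 : ℝ) : ℂ) * Complex.I * τ := by push_cast; ring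
    rw [h, abs_exp_I_mul]
  have h2 : ‖Complex.exp (Real.pi * Complex.I * ((x:ℚ):ℂ) * (((0:ℚ):ℂ) - 1))‖
      = 1 := by
    have h : (Real.pi:ℂ) * Complex.I * ((x:ℚ):ℂ) * (((0:ℚ):ℂ) - 1)
        = ((-(Real.pi * (x:ℝ)) : ℝ) : ℂ) * Complex.I := by push_cast; ring
    rw [h, abs_exp_real_mul_I]
  have h3 : ‖1 - Complex.exp (2 * Real.pi * Complex.I *
      (((0:ℚ):ℂ) * τ + ((x:ℚ):ℂ)))‖ = 2 * |Real.sin (Real.pi * (x:ℝ))| := by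
    have h : 2 * (Real.pi:ℂ) * Complex.I * (((0:ℚ):ℂ) * τ + ((x:ℚ):ℂ))
        = ((2 * (Real.pi * (x:ℝ)) : ℝ) : ℂ) * Complex.I := by push_cast; ring
    rw [h, abs_one_sub_exp]
    norm_num
  rw [h1, h2, h3, mul_one]

end SiegelAux


open Real SiegelAux

set_option maxHeartbeats 1000000 in
/-- Let `d_K ≤ −7` be the discriminant of an imaginary quadratic field,
`θ` as above, and `Q = X² + bXY + cY²` a reduced (primitive positive definite) form of
discriminant `d_K` with leading coefficient `a = 1`, `θ_Q = (−b+√d_K)/2`.  Then for every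
`N ≥ 2` and every integer `t` with `t ≢ 0, 1, −1 (mod N)` one has
`|g_{(0,t/N)}(θ_Q)⁻¹ / g_{(0,1/N)}(θ)⁻¹| < 1`, i.e.
`|g_{(0,1/N)}(θ)| < |g_{(0,t/N)}(θ_Q)|`. -/
theorem siegel_ineq_of_reduced_form_a_eq_one_s_eq_zero (d : ℤ) (hd : d ≤ -7)
    (hfund : IsImagQuadDisc d)
    (a b c : ℤ) (ha : a = 1) (hprim : Int.gcd (Int.gcd a b) c = 1)
    (hdisc : b ^ 2 - 4 * a * c = d)
    (hred : (-a < b ∧ b ≤ a ∧ a < c) ∨ (0 ≤ b ∧ b ≤ a ∧ a = c))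
    (N : ℕ) (hN : 2 ≤ N) (t : ℤ)
    (ht : ¬(N : ℤ) ∣ t ∧ ¬(N : ℤ) ∣ (t - 1) ∧ ¬(N : ℤ) ∣ (t + 1)) :
    ‖(siegel 0 ((t : ℚ) / N)
          ((-(b : ℂ) + Complex.I * Real.sqrt (-d)) / 2))⁻¹ /
        (siegel 0 (1 / N) (thetaOf d))⁻¹‖ < 1 ∧
      ‖siegel 0 (1 / N) (thetaOf d)‖ <
        ‖siegel 0 ((t : ℚ) / N)
          ((-(b : ℂ) + Complex.I * Real.sqrt (-d)) / 2)‖ := by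
  subst ha
  -- θ_Q = thetaOf d
  have hb : b = 0 ∨ b = 1 := by
    rcases hred with ⟨h1, h2, h3⟩ | ⟨h1, h2, h3⟩ <;> omega
  have hτ : thetaOf d = (-(b : ℂ) + Complex.I * Real.sqrt (-d)) / 2 := by
    rcases hb with hb | hb <;> subst hb
    · rw [thetaOf, if_pos (by omega)]
      push_cast
      ring
    · rw [thetaOf, if_neg (by omega)]
      push_cast
      ring
  rw [hτ]
  set τ : ℂ := (-(b : ℂ) + Complex.I * Real.sqrt (-d)) / 2 with hτdef
  -- imaginary part
  have him : τ.im = Real.sqrt (-d) / 2 := by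
    rw [hτdef]
    simp [Complex.div_im, Complex.add_im, Complex.mul_im]
  have hs2 : (2:ℝ) ≤ Real.sqrt (-(d:ℝ)) := by
    have h4 : (4:ℝ) ≤ -(d:ℝ) := by
      have h5 : (4:ℤ) ≤ -d := by omega
      exact_mod_cast h5
    nlinarith [Real.sq_sqrt (by linarith : (0:ℝ) ≤ -(d:ℝ)),
      Real.sqrt_nonneg (-(d:ℝ))]
  have him1 : 1 ≤ τ.im := by rw [him]; linarith
  -- ε
  set ε : ℝ := Real.exp (-(2 * π * τ.im)) with hεdef
  have hε0 : 0 ≤ ε := (Real.exp_pos _).le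
  have hε64 : ε ≤ 1 / 64 := by
    have h6 : ε ≤ Real.exp (-6) := by
      apply Real.exp_le_exp.2
      nlinarith [Real.pi_gt_three]
    have he2 : (2:ℝ) ≤ Real.exp 1 := by
      have := Real.add_one_le_exp (1:ℝ); linarith
    have h1 : Real.exp (-6) = (Real.exp (-1)) ^ (6:ℕ) := by
      rw [← Real.exp_nat_mul]; norm_num
    have h2 : Real.exp (-1) ≤ 1/2 := by
      rw [Real.exp_neg]
      have hmul : (Real.exp 1)⁻¹ * Real.exp 1 = 1 :=
        inv_mul_cancel₀ (ne_of_gt (Real.exp_pos 1))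
      nlinarith [inv_pos.mpr (Real.exp_pos 1)]
    have h3 : (Real.exp (-1)) ^ (6:ℕ) ≤ (1/2:ℝ) ^ (6:ℕ) :=
      pow_le_pow_left₀ (Real.exp_pos _).le h2 6
    calc ε ≤ Real.exp (-6) := h6
      _ = (Real.exp (-1))^(6:ℕ) := h1
      _ ≤ (1/2:ℝ)^(6:ℕ) := h3
      _ = 1/64 := by norm_num
  have habs_q : ‖Complex.exp (2 * Real.pi * Complex.I * τ)‖ = ε := by
    rw [Complex.norm_exp, hεdef]
    congr 1
    simp [Complex.mul_re, Complex.mul_im]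
  -- product bounds
  set S : ℝ := 3 * ε / (1 - ε) with hSdef
  have hS0 : 0 ≤ S := div_nonneg (by positivity) (by linarith)
  have hS21 : S ≤ 1/21 := by
    rw [hSdef, div_le_iff₀ (by linarith)]
    nlinarith
  have hbnd1 := tprod_abs_bounds (siegelTerm 0 (1 / N) τ) ε hε0 hε64
    (fun n => siegelTerm_bound _ _ _ _ habs_q (by linarith))
  have hbndt := tprod_abs_bounds (siegelTerm 0 ((t:ℚ) / N) τ) ε hε0 hε64
    (fun n => siegelTerm_bound _ _ _ _ habs_q (by linarith))
  set P1 : ℝ := ‖∏' n, siegelTerm 0 (1 / N) τ n‖ with hP1def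
  set Pt : ℝ := ‖∏' n, siegelTerm 0 ((t:ℚ) / N) τ n‖ with hPtdef
  obtain ⟨hP1l, hP1u⟩ := hbnd1
  obtain ⟨hPtl, hPtu⟩ := hbndt
  -- mod arithmetic
  obtain ⟨ht0, ht1, htm⟩ := ht
  have hN2 : (2:ℤ) ≤ (N:ℤ) := by exact_mod_cast hN
  set k : ℤ := t / (N:ℤ) with hkdef
  set m : ℤ := t % (N:ℤ) with hmdef
  have heq : (N:ℤ) * k + m = t := Int.mul_ediv_add_emod t N
  have hm0 : 0 ≤ m := Int.emod_nonneg t (by omega)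
  have hmN : m < N := Int.emod_lt_of_pos t (by omega)
  have hm_ne0 : m ≠ 0 := fun h => ht0 (Int.dvd_of_emod_eq_zero h)
  have hm_ne1 : m ≠ 1 := fun h => ht1 ⟨k, by omega⟩
  have hm_neN : m ≠ (N:ℤ) - 1 := fun h => htm ⟨k + 1, by rw [mul_add, mul_one]; omega⟩
  have hm2 : 2 ≤ m := by omega
  have hmN2 : m ≤ (N:ℤ) - 2 := by omega
  have hN4 : (4:ℤ) ≤ (N:ℤ) := by omega
  -- sines
  have hNr : (0:ℝ) < (N:ℝ) := by positivity
  have hNr4 : (4:ℝ) ≤ (N:ℝ) := by exact_mod_cast hN4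
  have hmr2 : (2:ℝ) ≤ (m:ℝ) := by exact_mod_cast hm2
  have hmrN : (m:ℝ) ≤ (N:ℝ) - 2 := by exact_mod_cast hmN2
  have hs1pos : 0 < Real.sin (π / N) :=
    Real.sin_pos_of_pos_of_lt_pi (by positivity)
      (div_lt_self Real.pi_pos (by exact_mod_cast (by omega : (1:ℤ) < (N:ℤ))))
  have hsin1 : |Real.sin (π * (((1:ℚ) / N : ℚ) : ℝ))| = Real.sin (π / N) := by
    have hc : (((1:ℚ) / N : ℚ) : ℝ) = 1 / (N:ℝ) := by push_cast; ring
    rw [hc, show π * (1 / (N:ℝ)) = π / N by ring, abs_of_pos hs1pos]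
  have hsint : |Real.sin (π * ((((t:ℚ)) / N : ℚ) : ℝ))| = Real.sin (π * (m:ℝ) / N) := by
    have hc : ((((t:ℚ)) / N : ℚ) : ℝ) = (t:ℝ) / (N:ℝ) := by push_cast; ring
    have h1 : (t:ℝ) = (N:ℝ) * (k:ℝ) + (m:ℝ) := by exact_mod_cast heq.symm
    have harg : π * ((t:ℝ) / N) = π * (m:ℝ) / N + (k:ℤ) * π := by
      rw [h1]; field_simp; ring
    rw [hc, harg, Real.sin_add_int_mul_pi, abs_mul]
    have habs1 : |((-1:ℝ)) ^ k| = 1 := by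
      rcases Int.even_or_odd k with he | ho
      · rw [he.neg_one_zpow]; norm_num
      · rw [ho.neg_one_zpow]; norm_num
    rw [habs1, one_mul, abs_of_nonneg]
    apply Real.sin_nonneg_of_nonneg_of_le_pi
    · positivity
    · rw [div_le_iff₀ hNr]
      nlinarith [Real.pi_pos]
  have hsin_ge : Real.sin (2 * (π / N)) ≤ Real.sin (π * (m:ℝ) / N) := by
    rcases le_or_gt (2 * (m:ℝ)) (N:ℝ) with h | h
    · exact sin_bound_aux _ _ hNr hmr2 h
    · have harg : π * (m:ℝ) / N = π - π * ((N:ℝ) - m) / N := by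
        field_simp; ring
      rw [harg, Real.sin_pi_sub]
      exact sin_bound_aux _ _ hNr (by linarith) (by linarith)
  have hcos : (7:ℝ)/10 ≤ Real.cos (π / N) := by
    have h1 : Real.cos (π/4) ≤ Real.cos (π / N) := by
      apply Real.cos_le_cos_of_nonneg_of_le_pi (by positivity)
        (by linarith [Real.pi_pos])
      rw [div_le_div_iff₀ hNr (by norm_num : (0:ℝ) < 4)]
      nlinarith [Real.pi_pos]
    rw [Real.cos_pi_div_four] at h1
    nlinarith [Real.sq_sqrt (by norm_num : (0:ℝ) ≤ 2), Real.sqrt_nonneg 2]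
  have hst_ge : 2 * Real.sin (π / N) * Real.cos (π / N) ≤ Real.sin (π * (m:ℝ) / N) := by
    rw [← Real.sin_two_mul]; exact hsin_ge
  -- key numeric inequality
  have hES : (1 - S) * Real.exp S ≤ 1 := by
    have h := Real.add_one_le_exp (-S)
    have h2 : Real.exp (-S) * Real.exp S = 1 := by
      rw [← Real.exp_add]; simp
    nlinarith [Real.exp_pos S]
  have hexpS : Real.exp S < (7/5) * (1 - S) := by
    nlinarith [Real.exp_pos S]
  -- assemble
  have habs1 : ‖siegel 0 (1 / N) τ‖
      = Real.exp (-(π / 6 * τ.im)) * (2 * Real.sin (π / N)) * P1 := by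
    rw [abs_siegel_zero, hsin1]
  have habst : ‖siegel 0 ((t:ℚ) / N) τ‖
      = Real.exp (-(π / 6 * τ.im)) * (2 * Real.sin (π * (m:ℝ) / N)) * Pt := by
    rw [abs_siegel_zero, hsint]
  have hE : 0 < Real.exp (-(π / 6 * τ.im)) := Real.exp_pos _
  have hP1pos : 0 < P1 := by linarith
  have hPtpos : 0 < Pt := by linarith
  have hstpos : 0 < Real.sin (π * (m:ℝ) / N) := by nlinarith
  have key : ‖siegel 0 (1 / N) τ‖ < ‖siegel 0 ((t:ℚ) / N) τ‖ := by
    rw [habs1, habst]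
    have hmain : 2 * Real.sin (π / N) * P1 < 2 * Real.sin (π * (m:ℝ) / N) * Pt := by
      calc 2 * Real.sin (π / N) * P1 ≤ 2 * Real.sin (π / N) * Real.exp S := by nlinarith
        _ < 2 * Real.sin (π / N) * ((7/5) * (1 - S)) := by nlinarith
        _ ≤ 2 * Real.sin (π * (m:ℝ) / N) * Pt := by
            have h7 : (7/5) * Real.sin (π / N) ≤ Real.sin (π * (m:ℝ) / N) := by nlinarith
            have h8 : (0:ℝ) < 1 - S := by linarith
            have h9 : (7/5 * Real.sin (π / N)) * (1 - S)
                ≤ Real.sin (π * (m:ℝ) / N) * Pt :=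
              mul_le_mul h7 hPtl h8.le hstpos.le
            nlinarith [h9]
    nlinarith
  have hG1pos : 0 < ‖siegel 0 (1 / N) τ‖ := by
    rw [habs1]; positivity
  refine ⟨?_, key⟩
  rw [norm_div, norm_inv, norm_inv, inv_div_inv, div_lt_one (by linarith)]
  exact key
end

section
/- Let x₁ = g_{(0,1/6)}(√−5)^{−12}, x₂ = g_{(1/6,0)}(√−5)^{−12}, x₃ = g_{(3/6,2/6)}(√−5)^{−12}, x₄ = g_{(2/6,3/6)}(√−5)^{−12}, x₅ = g_{(3/6,2/6)}((−1+√−5)/2)^{−12}, x₆ = g_{(1/6,5/6)}((−1+√−5)/2)^{−12}, x₇ = g_{(3/6,1/6)}((−1+√−5)/2)^{−12}, x₈ = g_{(5/6,4/6)}((−1+√−5)/2)^{−12}. Then |x_i / x₁| < 10⁻⁴ for every i = 2, …, 8; in particular |x_i/x₁| < 1/8 for i = 2, …, 8. -/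
section SiegelSupport

open Filter Topology

/-! ### Generic bounds for infinite products -/

lemma tprod_lower_aux (f : ℕ → ℂ) (u : ℕ → ℝ) (S : ℝ)
    (hu0 : ∀ n, 0 ≤ u n) (hu1 : ∀ n, u n ≤ 1)
    (hf : ∀ n, 1 - u n ≤ norm (f n))
    (hFS : ∀ F : Finset ℕ, ∑ n ∈ F, u n ≤ S) :
    1 - S ≤ norm (∏' n, f n) := by
  have hS0 : 0 ≤ S := by simpa using hFS ∅
  by_cases h : Multipliable f
  · have h1 : Filter.Tendsto (fun F : Finset ℕ => norm (∏ n ∈ F, f n))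
        Filter.atTop (𝓝 (norm (∏' n, f n))) :=
      (continuous_norm.tendsto _).comp h.hasProd
    refine ge_of_tendsto' h1 (fun F => ?_)
    rw [norm_prod]
    calc 1 - S ≤ 1 - ∑ n ∈ F, u n := by linarith [hFS F]
      _ ≤ ∏ n ∈ F, (1 - u n) := by
          induction F using Finset.cons_induction with
          | empty => simp
          | cons a F ha IH =>
            rw [Finset.prod_cons, Finset.sum_cons]
            have h1 : 0 ≤ ∑ n ∈ F, u n := Finset.sum_nonneg fun n _ => hu0 n
            nlinarith [hu0 a, hu1 a]
      _ ≤ ∏ n ∈ F, norm (f n) :=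
          Finset.prod_le_prod (fun n _ => by linarith [hu1 n]) (fun n _ => hf n)
  · rw [tprod_eq_one_of_not_multipliable h]
    simpa using hS0

lemma tprod_upper_aux (f : ℕ → ℂ) (u : ℕ → ℝ) (S : ℝ)
    (hf : ∀ n, norm (f n) ≤ 1 + u n)
    (hFS : ∀ F : Finset ℕ, ∑ n ∈ F, u n ≤ S) :
    norm (∏' n, f n) ≤ Real.exp S := by
  have hS0 : 0 ≤ S := by simpa using hFS ∅
  by_cases h : Multipliable f
  · have h1 : Filter.Tendsto (fun F : Finset ℕ => norm (∏ n ∈ F, f n))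
        Filter.atTop (𝓝 (norm (∏' n, f n))) :=
      (continuous_norm.tendsto _).comp h.hasProd
    refine le_of_tendsto' h1 (fun F => ?_)
    rw [norm_prod]
    calc ∏ n ∈ F, norm (f n) ≤ ∏ n ∈ F, Real.exp (u n) :=
          Finset.prod_le_prod (fun n _ => norm_nonneg _)
            (fun n _ => (hf n).trans (by linarith [Real.add_one_le_exp (u n)]))
      _ = Real.exp (∑ n ∈ F, u n) := by rw [Real.exp_sum]
      _ ≤ Real.exp S := Real.exp_le_exp.2 (hFS F)
  · rw [tprod_eq_one_of_not_multipliable h]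
    simpa using Real.exp_le_exp.2 hS0 |>.trans_eq' Real.exp_zero

lemma abs_term_sub_one (A B : ℂ) :
    norm ((1 - A) * (1 - B) - 1) ≤
      norm A + norm B + norm A * norm B := by
  have h : (1 - A) * (1 - B) - 1 = -A + (-B + A * B) := by ring
  rw [h]
  calc norm (-A + (-B + A * B))
      ≤ norm (-A) + norm (-B + A * B) := norm_add_le _ _
    _ ≤ norm (-A) + (norm (-B) + norm (A * B)) := by
        gcongr; exact norm_add_le _ _
    _ = norm A + norm B + norm A * norm B := by
        rw [norm_neg, norm_neg, norm_mul]; ring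

lemma one_le_abs_one_sub {w : ℂ} (h : w.re = 0) : 1 ≤ norm (1 - w) := by
  have h1 : (1 - w).re = 1 := by simp [h]
  calc (1:ℝ) = |(1 - w).re| := by rw [h1]; norm_num
    _ ≤ norm (1 - w) := Complex.abs_re_le_norm _

lemma abs_one_sub_ge (w : ℂ) : 1 - norm w ≤ norm (1 - w) := by
  have h : norm (1:ℂ) ≤ norm (1 - w) + norm w := by
    calc norm (1:ℂ) = norm ((1 - w) + w) := by ring_nf
      _ ≤ _ := norm_add_le _ _
  simp only [norm_one] at h
  linarith

lemma finset_sum_pow_le (F : Finset ℕ) (a : ℝ) (ha0 : 0 ≤ a) (ha1 : a < 1) :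
    ∑ n ∈ F, a ^ (n + 1) ≤ a / (1 - a) := by
  have hs : Summable (fun n : ℕ => a ^ (n + 1)) := by
    simpa [pow_succ] using (summable_geometric_of_lt_one ha0 ha1).mul_right a
  calc ∑ n ∈ F, a ^ (n + 1) ≤ ∑' n : ℕ, a ^ (n + 1) :=
        Summable.sum_le_tsum F (fun n _ => pow_nonneg ha0 _) hs
    _ = a / (1 - a) := by
        rw [show (fun n : ℕ => a ^ (n+1)) = fun n : ℕ => a ^ n * a from by
            funext n; rw [pow_succ]]
        rw [tsum_mul_right, tsum_geometric_of_lt_one ha0 ha1]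
        field_simp

lemma finset_sum_pow_le' (F : Finset ℕ) (a : ℝ) (ha0 : 0 ≤ a) (ha1 : a < 1) :
    ∑ n ∈ F.erase 0, a ^ (n + 1) ≤ a ^ 2 / (1 - a) := by
  have key : ∑ n ∈ F.erase 0, a ^ (n + 1) = ∑ m ∈ (F.erase 0).image (· - 1), a ^ (m + 2) := by
    rw [Finset.sum_image]
    · refine Finset.sum_congr rfl (fun n hn => ?_)
      have hn1 : 1 ≤ n := Nat.one_le_iff_ne_zero.2 (Finset.ne_of_mem_erase hn)
      congr 1
      omega
    · intro x hx y hy hxy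
      have hx1 : 1 ≤ x := Nat.one_le_iff_ne_zero.2 (Finset.ne_of_mem_erase hx)
      have hy1 : 1 ≤ y := Nat.one_le_iff_ne_zero.2 (Finset.ne_of_mem_erase hy)
      simp only at hxy
      omega
  rw [key]
  have hs : Summable (fun n : ℕ => a ^ (n + 2)) := by
    simpa [pow_succ, mul_assoc] using (summable_geometric_of_lt_one ha0 ha1).mul_right (a * a)
  calc ∑ m ∈ (F.erase 0).image (· - 1), a ^ (m + 2)
      ≤ ∑' n : ℕ, a ^ (n + 2) := Summable.sum_le_tsum _ (fun n _ => pow_nonneg ha0 _) hs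
    _ = a ^ 2 / (1 - a) := by
        rw [show (fun n : ℕ => a ^ (n+2)) = fun n : ℕ => a ^ n * (a * a) from by
            funext n; ring]
        rw [tsum_mul_right, tsum_geometric_of_lt_one ha0 ha1]
        field_simp

/-! ### Numerical bounds -/

lemma sqrt5_bounds : (2.2360679 : ℝ) ≤ Real.sqrt 5 ∧ Real.sqrt 5 ≤ 2.236068 := by
  have h5 : Real.sqrt 5 ^ 2 = 5 := Real.sq_sqrt (by norm_num)
  have h0 : 0 ≤ Real.sqrt 5 := Real.sqrt_nonneg 5
  constructor <;> nlinarith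

lemma t_bounds : (7.02481 : ℝ) ≤ Real.pi * Real.sqrt 5 ∧ Real.pi * Real.sqrt 5 ≤ 7.02482 := by
  obtain ⟨hs1, hs2⟩ := sqrt5_bounds
  have hp1 := Real.pi_gt_d6
  have hp2 := Real.pi_lt_d6
  constructor <;> nlinarith

lemma exp_ge_poly7 (x : ℝ) (hx : 0 ≤ x) :
    1 + x + x^2/2 + x^3/6 + x^4/24 + x^5/120 + x^6/720 ≤ Real.exp x := by
  have h := Real.sum_le_exp_of_nonneg hx 7
  simp [Finset.sum_range_succ, Nat.factorial] at h
  nlinarith [h]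

lemma exp_neg_le_inv {v c : ℝ} (h : c ≤ Real.exp v) (hc : 0 < c) :
    Real.exp (-v) ≤ c⁻¹ := by
  rw [Real.exp_neg]
  exact inv_anti₀ hc h

lemma exp_neg_one_le : Real.exp (-1) ≤ 0.3678794412 := by
  have h := Real.exp_one_gt_d9
  have h2 : Real.exp (-1) = (Real.exp 1)⁻¹ := by rw [Real.exp_neg]
  rw [h2]
  rw [inv_le_iff_one_le_mul₀ (Real.exp_pos 1)]
  nlinarith

lemma exp_neg_le_q (v : ℝ) (n : ℕ) (h : (n : ℝ) ≤ v) :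
    Real.exp (-v) ≤ 0.3678794412 ^ n := by
  calc Real.exp (-v) ≤ Real.exp (-(n:ℝ)) := Real.exp_le_exp.2 (by linarith)
    _ = Real.exp (-1) ^ n := by
        rw [← Real.exp_nat_mul]; norm_num
    _ ≤ 0.3678794412 ^ n := by
        apply pow_le_pow_left₀ (Real.exp_pos _).le exp_neg_one_le

lemma exp_le_e (v : ℝ) (n : ℕ) (h : v ≤ n) : Real.exp v ≤ 2.7182818286 ^ n := by
  calc Real.exp v ≤ Real.exp (n:ℝ) := Real.exp_le_exp.2 h
    _ = Real.exp 1 ^ n := by rw [← Real.exp_nat_mul]; norm_num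
    _ ≤ 2.7182818286 ^ n :=
        pow_le_pow_left₀ (Real.exp_pos _).le Real.exp_one_lt_d9.le _

lemma exp_le_inv_one_sub {S : ℝ} (h1 : S < 1) : Real.exp S ≤ (1 - S)⁻¹ := by
  have h := Real.add_one_le_exp (-S)
  have h2 : Real.exp S = (Real.exp (-S))⁻¹ := by rw [Real.exp_neg, inv_inv]
  rw [h2]
  exact inv_anti₀ (by linarith) (by linarith)

lemma S_helper {A b c A' b' c' S : ℝ} (hA0 : 0 ≤ A) (hb0 : 0 ≤ b) (hc0 : 0 ≤ c)
    (hA : A ≤ A') (hb : b ≤ b') (hc : c ≤ c') (hA1 : A' < 1) (hS0 : 0 ≤ S)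
    (hnum : A' * (b' + c' + A') ≤ S * (1 - A')) :
    A * (b + c + A) / (1 - A) ≤ S := by
  have h1 : A < 1 := lt_of_le_of_lt hA hA1
  rw [div_le_iff₀ (by linarith)]
  have h2 : A * (b + c + A) ≤ A' * (b' + c' + A') := by
    apply mul_le_mul hA (by linarith) (by linarith) (by linarith)
  have h3 : S * (1 - A') ≤ S * (1 - A) := by nlinarith
  linarith

lemma S_helper8 {A b c A' b' c' u₀ S : ℝ} (hA0 : 0 ≤ A) (hb0 : 0 ≤ b) (hc0 : 0 ≤ c)
    (hA : A ≤ A') (hb : b ≤ b') (hc : c ≤ c') (hA1 : A' < 1) (hS0 : 0 ≤ S)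
    (hnum : u₀ * (1 - A') + A' ^ 2 * (b' + c' + A') ≤ S * (1 - A')) (hu₀ : 0 ≤ u₀) :
    u₀ + A ^ 2 * (b + c + A) / (1 - A) ≤ S := by
  have h1 : A < 1 := lt_of_le_of_lt hA hA1
  have h1' : 0 < 1 - A' := by linarith
  have hb'0 : 0 ≤ b' := le_trans hb0 hb
  have hc'0 : 0 ≤ c' := le_trans hc0 hc
  have hA'0 : 0 ≤ A' := le_trans hA0 hA
  have h2 : A ^ 2 * (b + c + A) ≤ A' ^ 2 * (b' + c' + A') := by
    apply mul_le_mul (by nlinarith) (by linarith) (by linarith) (by positivity)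
  have h4 : A ^ 2 * (b + c + A) / (1 - A) ≤ A' ^ 2 * (b' + c' + A') / (1 - A') := by
    apply div_le_div₀ (by positivity) h2 h1' (by linarith)
  have h5 : A' ^ 2 * (b' + c' + A') / (1 - A') ≤ S - u₀ := by
    rw [div_le_iff₀ h1']; nlinarith
  linarith

/-! ### Exponent normalisation helpers -/

lemma abs_exp_of_eq {w : ℂ} (x y : ℝ) (h : w = (x:ℂ) + (y:ℂ)*Complex.I) :
    norm (Complex.exp w) = Real.exp x := by
  rw [h, Complex.norm_exp]; simp

lemma re_exp_zero_of_eq {w : ℂ} (x y : ℝ) (h : w = (x:ℂ) + (y:ℂ)*Complex.I)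
    (hy : Real.cos y = 0) : (Complex.exp w).re = 0 := by
  rw [h, Complex.exp_re]
  simp [hy]

lemma cos_three_pi_div_two : Real.cos (3*Real.pi/2) = 0 := by
  rw [show (3*Real.pi/2 : ℝ) = Real.pi + Real.pi/2 by ring, Real.cos_add]
  simp

end SiegelSupport



/-- The eight conjugates `x₁, …, x₈` of `x = g_{(0,1/6)}(√−5)^{−12}` over
`K = ℚ(√−5)`, given by singular values of Siegel functions at `√−5 = i√5` and
`(−1+√−5)/2`. -/
noncomputable def exampleConjugates : Fin 8 → ℂ :=
  ![siegel 0 (1/6) (Complex.I * Real.sqrt 5) ^ (-12 : ℤ),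
    siegel (1/6) 0 (Complex.I * Real.sqrt 5) ^ (-12 : ℤ),
    siegel (3/6) (2/6) (Complex.I * Real.sqrt 5) ^ (-12 : ℤ),
    siegel (2/6) (3/6) (Complex.I * Real.sqrt 5) ^ (-12 : ℤ),
    siegel (3/6) (2/6) ((-1 + Complex.I * Real.sqrt 5) / 2) ^ (-12 : ℤ),
    siegel (1/6) (5/6) ((-1 + Complex.I * Real.sqrt 5) / 2) ^ (-12 : ℤ),
    siegel (3/6) (1/6) ((-1 + Complex.I * Real.sqrt 5) / 2) ^ (-12 : ℤ),
    siegel (5/6) (4/6) ((-1 + Complex.I * Real.sqrt 5) / 2) ^ (-12 : ℤ)]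


section SiegelBounds

lemma siegelTerm_sub_one_le (r₁ r₂ : ℚ) (τ : ℂ) (x y : ℝ)
    (ha : norm (Complex.exp (2 * Real.pi * Complex.I * τ)) = Real.exp x)
    (hb : norm (Complex.exp (2 * Real.pi * Complex.I * ((r₁ : ℂ) * τ + (r₂ : ℂ)))) = Real.exp y)
    (hx : Real.exp x ≤ 1) (n : ℕ) :
    norm (siegelTerm r₁ r₂ τ n - 1) ≤
      Real.exp x ^ (n + 1) * (Real.exp y + Real.exp (-y) + Real.exp x) := by
  set E := Complex.exp (2 * Real.pi * Complex.I * τ)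
  set Q := Complex.exp (2 * Real.pi * Complex.I * ((r₁ : ℂ) * τ + (r₂ : ℂ)))
  have hA : norm (E ^ (n+1) * Q) = Real.exp x ^ (n+1) * Real.exp y := by
    rw [norm_mul, norm_pow, ha, hb]
  have hB : norm (E ^ (n+1) * Q⁻¹) = Real.exp x ^ (n+1) * Real.exp (-y) := by
    rw [norm_mul, norm_pow, norm_inv, ha, hb, Real.exp_neg]
  have h := abs_term_sub_one (E ^ (n+1) * Q) (E ^ (n+1) * Q⁻¹)
  have hterm : siegelTerm r₁ r₂ τ n = (1 - E ^ (n+1) * Q) * (1 - E ^ (n+1) * Q⁻¹) := rfl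
  rw [hterm]
  refine h.trans ?_
  rw [hA, hB]
  have hxp : (0:ℝ) ≤ Real.exp x ^ (n+1) := pow_nonneg (Real.exp_pos x).le _
  have h2 : Real.exp x ^ (n+1) * Real.exp y * (Real.exp x ^ (n+1) * Real.exp (-y))
      = Real.exp x ^ (n+1) * Real.exp x ^ (n+1) := by
    have : Real.exp y * Real.exp (-y) = 1 := by rw [← Real.exp_add]; simp
    nlinarith [this]
  rw [h2]
  have h3 : Real.exp x ^ (n+1) ≤ Real.exp x := by
    calc Real.exp x ^ (n+1) = Real.exp x * Real.exp x ^ n := by ring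
      _ ≤ Real.exp x * 1 := by
          have := pow_le_one₀ (Real.exp_pos x).le hx (n := n); nlinarith [Real.exp_pos x]
      _ = Real.exp x := by ring
  nlinarith [Real.exp_pos x, Real.exp_pos y, Real.exp_pos (-y)]

lemma tprod_siegelTerm_bounds (r₁ r₂ : ℚ) (τ : ℂ) (x y S : ℝ)
    (ha : norm (Complex.exp (2 * Real.pi * Complex.I * τ)) = Real.exp x)
    (hb : norm (Complex.exp (2 * Real.pi * Complex.I * ((r₁ : ℂ) * τ + (r₂ : ℂ)))) = Real.exp y)
    (hx : Real.exp x < 1)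
    (hS : Real.exp x * (Real.exp y + Real.exp (-y) + Real.exp x) / (1 - Real.exp x) ≤ S)
    (hS1 : S ≤ 1) :
    1 - S ≤ norm (∏' n, siegelTerm r₁ r₂ τ n) ∧
      norm (∏' n, siegelTerm r₁ r₂ τ n) ≤ Real.exp S := by
  set a := Real.exp x with hadef
  set M := Real.exp y + Real.exp (-y) + Real.exp x with hMdef
  have ha0 : 0 < a := Real.exp_pos x
  have hM0 : 0 < M := by positivity
  set u : ℕ → ℝ := fun n => a ^ (n + 1) * M with hu
  have hu0 : ∀ n, 0 ≤ u n := fun n => by positivity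
  have hterm : ∀ n, norm (siegelTerm r₁ r₂ τ n - 1) ≤ u n := fun n =>
    siegelTerm_sub_one_le r₁ r₂ τ x y ha hb hx.le n
  have hFS : ∀ F : Finset ℕ, ∑ n ∈ F, u n ≤ S := by
    intro F
    calc ∑ n ∈ F, a ^ (n + 1) * M = (∑ n ∈ F, a ^ (n + 1)) * M := by
          rw [Finset.sum_mul]
      _ ≤ (a / (1 - a)) * M := by
          have := finset_sum_pow_le F a ha0.le hx
          nlinarith
      _ ≤ S := by rw [div_mul_eq_mul_div, mul_comm] at *; linarith [hS]
  have hu1 : ∀ n, u n ≤ 1 := by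
    intro n
    have := hFS {n}
    simpa using this.trans hS1
  constructor
  · refine tprod_lower_aux _ u S hu0 hu1 (fun n => ?_) hFS
    have h1 : norm (1:ℂ) ≤ norm (siegelTerm r₁ r₂ τ n) +
        norm (siegelTerm r₁ r₂ τ n - 1) := by
      calc norm (1:ℂ) = norm (siegelTerm r₁ r₂ τ n - (siegelTerm r₁ r₂ τ n - 1)) := by
            ring_nf
        _ ≤ _ := norm_sub_le _ _
    simp only [norm_one] at h1
    linarith [hterm n]
  · refine tprod_upper_aux _ u S (fun n => ?_) hFS
    have h1 : norm (siegelTerm r₁ r₂ τ n) ≤ norm (1:ℂ) +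
        norm (siegelTerm r₁ r₂ τ n - 1) := by
      calc norm (siegelTerm r₁ r₂ τ n)
          = norm (1 + (siegelTerm r₁ r₂ τ n - 1)) := by ring_nf
        _ ≤ _ := norm_add_le _ _
    simp only [norm_one] at h1
    linarith [hterm n]

lemma tprod_siegelTerm_lower8 (r₁ r₂ : ℚ) (τ : ℂ) (x y S u₀ : ℝ)
    (ha : norm (Complex.exp (2 * Real.pi * Complex.I * τ)) = Real.exp x)
    (hb : norm (Complex.exp (2 * Real.pi * Complex.I * ((r₁ : ℂ) * τ + (r₂ : ℂ)))) = Real.exp y)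
    (hx : Real.exp x < 1)
    (h0 : 1 - u₀ ≤ norm (siegelTerm r₁ r₂ τ 0)) (hu₀0 : 0 ≤ u₀) (hu₀1 : u₀ ≤ 1)
    (hS : u₀ + Real.exp x ^ 2 * (Real.exp y + Real.exp (-y) + Real.exp x) / (1 - Real.exp x) ≤ S)
    (hS1 : S ≤ 1) :
    1 - S ≤ norm (∏' n, siegelTerm r₁ r₂ τ n) := by
  set a := Real.exp x with hadef
  set M := Real.exp y + Real.exp (-y) + Real.exp x with hMdef
  have ha0 : 0 < a := Real.exp_pos x
  have hM0 : 0 < M := by positivity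
  set u : ℕ → ℝ := fun n => if n = 0 then u₀ else a ^ (n + 1) * M with hu
  have hu0 : ∀ n, 0 ≤ u n := by
    intro n; by_cases h : n = 0 <;> simp [hu, h] <;> positivity
  have hterm : ∀ n, norm (siegelTerm r₁ r₂ τ n - 1) ≤ a ^ (n+1) * M := fun n =>
    siegelTerm_sub_one_le r₁ r₂ τ x y ha hb hx.le n
  have hFS : ∀ F : Finset ℕ, ∑ n ∈ F, u n ≤ S := by
    intro F
    have herase : ∑ n ∈ F.erase 0, u n ≤ a ^ 2 * M / (1 - a) := by
      have hcongr : ∑ n ∈ F.erase 0, u n = ∑ n ∈ F.erase 0, a ^ (n + 1) * M :=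
        Finset.sum_congr rfl (fun n hn => by
          simp [hu, Finset.ne_of_mem_erase hn])
      rw [hcongr, ← Finset.sum_mul]
      have := finset_sum_pow_le' F a ha0.le hx
      have h1a : 0 < 1 - a := by linarith
      calc (∑ n ∈ F.erase 0, a ^ (n+1)) * M ≤ (a^2/(1-a)) * M := by nlinarith
        _ = a^2 * M / (1-a) := by ring
    by_cases h : 0 ∈ F
    · have := Finset.sum_erase_add F u h
      have hu00 : u 0 = u₀ := by simp [hu]
      linarith [herase, this.symm.le, this.le]
    · rw [Finset.erase_eq_of_notMem h] at herase
      linarith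
  have hu1 : ∀ n, u n ≤ 1 := by
    intro n
    have := hFS {n}
    simpa using this.trans hS1
  refine (by linarith : (1:ℝ) - S ≤ 1 - S).trans (tprod_lower_aux _ u S hu0 hu1 (fun n => ?_) hFS)
  by_cases h : n = 0
  · subst h; simpa [hu] using h0
  · have h1 : norm (1:ℂ) ≤ norm (siegelTerm r₁ r₂ τ n) +
        norm (siegelTerm r₁ r₂ τ n - 1) := by
      calc norm (1:ℂ) = norm (siegelTerm r₁ r₂ τ n - (siegelTerm r₁ r₂ τ n - 1)) := by
            ring_nf
        _ ≤ _ := norm_sub_le _ _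
    simp only [norm_one] at h1
    have h2 : u n = a ^ (n+1) * M := by simp [hu, h]
    rw [h2]
    linarith [hterm n]

lemma abs_phase (r₁ r₂ : ℚ) :
    norm (Complex.exp (Real.pi * Complex.I * (r₂:ℂ) * ((r₁:ℂ) - 1))) = 1 := by
  rw [abs_exp_of_eq 0 (Real.pi * ((r₂:ℝ) * ((r₁:ℝ) - 1)))
    (by push_cast; ring), Real.exp_zero]

lemma siegel_abs (r₁ r₂ : ℚ) (τ : ℂ) :
    norm (siegel r₁ r₂ τ) =
      norm (Complex.exp (Real.pi * Complex.I * ((r₁:ℂ)^2 - (r₁:ℂ) + 1/6) * τ)) *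
      (norm (1 - Complex.exp (2 * Real.pi * Complex.I * ((r₁:ℂ)*τ + (r₂:ℂ)))) *
       norm (∏' n : ℕ, siegelTerm r₁ r₂ τ n)) := by
  unfold siegel
  rw [norm_mul, norm_mul, norm_mul, norm_neg, abs_phase]
  ring

lemma siegel_lower_generic (r₁ r₂ : ℚ) (τ : ℂ) (e xa xb a' b' c' S D L : ℝ)
    (hlead : norm (Complex.exp (Real.pi * Complex.I * ((r₁:ℂ)^2 - (r₁:ℂ) + 1/6) * τ)) = Real.exp e)
    (ha : norm (Complex.exp (2 * Real.pi * Complex.I * τ)) = Real.exp xa)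
    (hb : norm (Complex.exp (2 * Real.pi * Complex.I * ((r₁:ℂ)*τ + (r₂:ℂ)))) = Real.exp xb)
    (hea : Real.exp xa ≤ a') (heb : Real.exp xb ≤ b') (hec : Real.exp (-xb) ≤ c')
    (ha'1 : a' < 1)
    (hnum : a' * (b' + c' + a') ≤ S * (1 - a'))
    (hS0 : 0 ≤ S) (hS1 : S ≤ 1)
    (hD : D ≤ norm (1 - Complex.exp (2 * Real.pi * Complex.I * ((r₁:ℂ)*τ + (r₂:ℂ)))))
    (hD0 : 0 ≤ D)
    (hL : L ≤ Real.exp e * (D * (1 - S))) :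
    L ≤ norm (siegel r₁ r₂ τ) := by
  have hx : Real.exp xa < 1 := lt_of_le_of_lt hea ha'1
  have hS' : Real.exp xa * (Real.exp xb + Real.exp (-xb) + Real.exp xa) / (1 - Real.exp xa) ≤ S :=
    S_helper (Real.exp_pos _).le (Real.exp_pos _).le (Real.exp_pos _).le hea heb hec ha'1 hS0 hnum
  obtain ⟨hP1, -⟩ := tprod_siegelTerm_bounds r₁ r₂ τ xa xb S ha hb hx hS' hS1
  rw [siegel_abs, hlead]
  refine hL.trans ?_
  have h1S : (0:ℝ) ≤ 1 - S := by linarith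
  gcongr

end SiegelBounds



lemma case2 : (0.72:ℝ) ≤ norm (siegel (1/6) (0) (Complex.I * (Real.sqrt 5 : ℂ))) := by
  obtain ⟨ht1, ht2⟩ := t_bounds
  set t : ℝ := Real.pi * Real.sqrt 5 with htdef
  have hπ := Real.pi_pos
  have hlead : norm (Complex.exp (Real.pi * Complex.I * (((1/6:ℚ):ℂ)^2 - ((1/6:ℚ):ℂ) + 1/6) * (Complex.I * (Real.sqrt 5 : ℂ)))) = Real.exp (-(t/36)) := by
    refine abs_exp_of_eq _ (0) ?_
    push_cast [htdef]; ring_nf; simp only [Complex.I_sq]; ring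
  have ha : norm (Complex.exp (2 * Real.pi * Complex.I * (Complex.I * (Real.sqrt 5 : ℂ)))) = Real.exp (-(2*t)) := by
    refine abs_exp_of_eq _ (0) ?_
    push_cast [htdef]; ring_nf; simp only [Complex.I_sq]; ring
  have hb : norm (Complex.exp (2 * Real.pi * Complex.I * (((1/6:ℚ):ℂ) * (Complex.I * (Real.sqrt 5 : ℂ)) + ((0:ℚ):ℂ)))) = Real.exp (-(t/3)) := by
    refine abs_exp_of_eq _ (0) ?_
    push_cast [htdef]; ring_nf; simp only [Complex.I_sq]; ring
  have hea : Real.exp (-(2*t)) ≤ 0.00000084 := (exp_neg_le_q (2*t) 14 (by push_cast; linarith)).trans (by norm_num)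
  have heb : Real.exp (-(t/3)) ≤ 0.0972 := by
    refine (exp_neg_le_inv (c := 10.29) ?_ (by norm_num)).trans (by norm_num)
    have hx0 : (2.341603 : ℝ) ≤ t/3 := by linarith
    have hpoly := exp_ge_poly7 (t/3) (by linarith)
    have hmono : (1:ℝ) + 2.341603 + 2.341603^2/2 + 2.341603^3/6 + 2.341603^4/24 + 2.341603^5/120 + 2.341603^6/720
        ≤ 1 + (t/3) + (t/3)^2/2 + (t/3)^3/6 + (t/3)^4/24 + (t/3)^5/120 + (t/3)^6/720 := by
      gcongr
    have hval : (10.29:ℝ) ≤ 1 + 2.341603 + 2.341603^2/2 + 2.341603^3/6 + 2.341603^4/24 + 2.341603^5/120 + 2.341603^6/720 := by norm_num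
    linarith
  have hec : Real.exp (-(-(t/3))) ≤ 20.0856 := by rw [neg_neg]; exact (exp_le_e (t/3) 3 (by push_cast; linarith)).trans (by norm_num)
  have hD : (1 - 0.0972:ℝ) ≤ norm (1 - Complex.exp (2 * Real.pi * Complex.I * (((1/6:ℚ):ℂ) * (Complex.I * (Real.sqrt 5 : ℂ)) + ((0:ℚ):ℂ)))) := by
    have h := abs_one_sub_ge (Complex.exp (2 * Real.pi * Complex.I * (((1/6:ℚ):ℂ) * (Complex.I * (Real.sqrt 5 : ℂ)) + ((0:ℚ):ℂ)))); rw [hb] at h; linarith [heb]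
  refine siegel_lower_generic (1/6) (0) (Complex.I * (Real.sqrt 5 : ℂ)) (-(t/36)) (-(2*t)) (-(t/3)) 0.00000084 0.0972 20.0856 0.00002 (1 - 0.0972) (0.72) hlead ha hb hea heb hec (by norm_num) (by norm_num) (by norm_num) (by norm_num) hD (by norm_num) ?_
  have hexp := Real.add_one_le_exp (-(t/36))
  nlinarith [Real.exp_pos (-(t/36))]


lemma case3 : (1.5:ℝ) ≤ norm (siegel (3/6) (2/6) (Complex.I * (Real.sqrt 5 : ℂ))) := by
  obtain ⟨ht1, ht2⟩ := t_bounds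
  set t : ℝ := Real.pi * Real.sqrt 5 with htdef
  have hπ := Real.pi_pos
  have hlead : norm (Complex.exp (Real.pi * Complex.I * (((3/6:ℚ):ℂ)^2 - ((3/6:ℚ):ℂ) + 1/6) * (Complex.I * (Real.sqrt 5 : ℂ)))) = Real.exp (t/12) := by
    refine abs_exp_of_eq _ (0) ?_
    push_cast [htdef]; ring_nf; simp only [Complex.I_sq]; ring
  have ha : norm (Complex.exp (2 * Real.pi * Complex.I * (Complex.I * (Real.sqrt 5 : ℂ)))) = Real.exp (-(2*t)) := by
    refine abs_exp_of_eq _ (0) ?_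
    push_cast [htdef]; ring_nf; simp only [Complex.I_sq]; ring
  have hb : norm (Complex.exp (2 * Real.pi * Complex.I * (((3/6:ℚ):ℂ) * (Complex.I * (Real.sqrt 5 : ℂ)) + ((2/6:ℚ):ℂ)))) = Real.exp (-t) := by
    refine abs_exp_of_eq _ (2*Real.pi/3) ?_
    push_cast [htdef]; ring_nf; simp only [Complex.I_sq]; ring
  have hea : Real.exp (-(2*t)) ≤ 0.00000084 := (exp_neg_le_q (2*t) 14 (by push_cast; linarith)).trans (by norm_num)
  have heb : Real.exp (-t) ≤ 0.000912 := (exp_neg_le_q (t) 7 (by push_cast; linarith)).trans (by norm_num)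
  have hec : Real.exp (-(-t)) ≤ 2980.96 := by rw [neg_neg]; exact (exp_le_e (t) 8 (by push_cast; linarith)).trans (by norm_num)
  have hD : (1 - 0.000912:ℝ) ≤ norm (1 - Complex.exp (2 * Real.pi * Complex.I * (((3/6:ℚ):ℂ) * (Complex.I * (Real.sqrt 5 : ℂ)) + ((2/6:ℚ):ℂ)))) := by
    have h := abs_one_sub_ge (Complex.exp (2 * Real.pi * Complex.I * (((3/6:ℚ):ℂ) * (Complex.I * (Real.sqrt 5 : ℂ)) + ((2/6:ℚ):ℂ)))); rw [hb] at h; linarith [heb]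
  refine siegel_lower_generic (3/6) (2/6) (Complex.I * (Real.sqrt 5 : ℂ)) (t/12) (-(2*t)) (-t) 0.00000084 0.000912 2980.96 0.0026 (1 - 0.000912) (1.5) hlead ha hb hea heb hec (by norm_num) (by norm_num) (by norm_num) (by norm_num) hD (by norm_num) ?_
  have hexp := Real.add_one_le_exp (t/12)
  nlinarith [Real.exp_pos (t/12)]


lemma case4 : (1.35:ℝ) ≤ norm (siegel (2/6) (3/6) (Complex.I * (Real.sqrt 5 : ℂ))) := by
  obtain ⟨ht1, ht2⟩ := t_bounds
  set t : ℝ := Real.pi * Real.sqrt 5 with htdef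
  have hπ := Real.pi_pos
  have hlead : norm (Complex.exp (Real.pi * Complex.I * (((2/6:ℚ):ℂ)^2 - ((2/6:ℚ):ℂ) + 1/6) * (Complex.I * (Real.sqrt 5 : ℂ)))) = Real.exp (t/18) := by
    refine abs_exp_of_eq _ (0) ?_
    push_cast [htdef]; ring_nf; simp only [Complex.I_sq]; ring
  have ha : norm (Complex.exp (2 * Real.pi * Complex.I * (Complex.I * (Real.sqrt 5 : ℂ)))) = Real.exp (-(2*t)) := by
    refine abs_exp_of_eq _ (0) ?_
    push_cast [htdef]; ring_nf; simp only [Complex.I_sq]; ring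
  have hb : norm (Complex.exp (2 * Real.pi * Complex.I * (((2/6:ℚ):ℂ) * (Complex.I * (Real.sqrt 5 : ℂ)) + ((3/6:ℚ):ℂ)))) = Real.exp (-(2*t/3)) := by
    refine abs_exp_of_eq _ (Real.pi) ?_
    push_cast [htdef]; ring_nf; simp only [Complex.I_sq]; ring
  have hea : Real.exp (-(2*t)) ≤ 0.00000084 := (exp_neg_le_q (2*t) 14 (by push_cast; linarith)).trans (by norm_num)
  have heb : Real.exp (-(2*t/3)) ≤ 0.011464 := by
    refine (exp_neg_le_inv (c := 87.23) ?_ (by norm_num)).trans (by norm_num)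
    have hx0 : (4.683206 : ℝ) ≤ 2*t/3 := by linarith
    have hpoly := exp_ge_poly7 (2*t/3) (by linarith)
    have hmono : (1:ℝ) + 4.683206 + 4.683206^2/2 + 4.683206^3/6 + 4.683206^4/24 + 4.683206^5/120 + 4.683206^6/720
        ≤ 1 + (2*t/3) + (2*t/3)^2/2 + (2*t/3)^3/6 + (2*t/3)^4/24 + (2*t/3)^5/120 + (2*t/3)^6/720 := by
      gcongr
    have hval : (87.23:ℝ) ≤ 1 + 4.683206 + 4.683206^2/2 + 4.683206^3/6 + 4.683206^4/24 + 4.683206^5/120 + 4.683206^6/720 := by norm_num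
    linarith
  have hec : Real.exp (-(-(2*t/3))) ≤ 148.414 := by rw [neg_neg]; exact (exp_le_e (2*t/3) 5 (by push_cast; linarith)).trans (by norm_num)
  have hD : (1 - 0.011464:ℝ) ≤ norm (1 - Complex.exp (2 * Real.pi * Complex.I * (((2/6:ℚ):ℂ) * (Complex.I * (Real.sqrt 5 : ℂ)) + ((3/6:ℚ):ℂ)))) := by
    have h := abs_one_sub_ge (Complex.exp (2 * Real.pi * Complex.I * (((2/6:ℚ):ℂ) * (Complex.I * (Real.sqrt 5 : ℂ)) + ((3/6:ℚ):ℂ)))); rw [hb] at h; linarith [heb]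
  refine siegel_lower_generic (2/6) (3/6) (Complex.I * (Real.sqrt 5 : ℂ)) (t/18) (-(2*t)) (-(2*t/3)) 0.00000084 0.011464 148.414 0.00013 (1 - 0.011464) (1.35) hlead ha hb hea heb hec (by norm_num) (by norm_num) (by norm_num) (by norm_num) hD (by norm_num) ?_
  have hexp := Real.add_one_le_exp (t/18)
  nlinarith [Real.exp_pos (t/18)]


lemma case5 : (1.18:ℝ) ≤ norm (siegel (3/6) (2/6) ((-1 + Complex.I * (Real.sqrt 5 : ℂ)) / 2)) := by
  obtain ⟨ht1, ht2⟩ := t_bounds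
  set t : ℝ := Real.pi * Real.sqrt 5 with htdef
  have hπ := Real.pi_pos
  have hlead : norm (Complex.exp (Real.pi * Complex.I * (((3/6:ℚ):ℂ)^2 - ((3/6:ℚ):ℂ) + 1/6) * ((-1 + Complex.I * (Real.sqrt 5 : ℂ)) / 2))) = Real.exp (t/24) := by
    refine abs_exp_of_eq _ (Real.pi/24) ?_
    push_cast [htdef]; ring_nf; simp only [Complex.I_sq]; ring
  have ha : norm (Complex.exp (2 * Real.pi * Complex.I * ((-1 + Complex.I * (Real.sqrt 5 : ℂ)) / 2))) = Real.exp (-t) := by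
    refine abs_exp_of_eq _ (-Real.pi) ?_
    push_cast [htdef]; ring_nf; simp only [Complex.I_sq]; ring
  have hb : norm (Complex.exp (2 * Real.pi * Complex.I * (((3/6:ℚ):ℂ) * ((-1 + Complex.I * (Real.sqrt 5 : ℂ)) / 2) + ((2/6:ℚ):ℂ)))) = Real.exp (-(t/2)) := by
    refine abs_exp_of_eq _ (Real.pi/6) ?_
    push_cast [htdef]; ring_nf; simp only [Complex.I_sq]; ring
  have hea : Real.exp (-t) ≤ 0.000912 := (exp_neg_le_q (t) 7 (by push_cast; linarith)).trans (by norm_num)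
  have heb : Real.exp (-(t/2)) ≤ 0.03195 := by
    refine (exp_neg_le_inv (c := 31.30) ?_ (by norm_num)).trans (by norm_num)
    have hx0 : (3.512405 : ℝ) ≤ t/2 := by linarith
    have hpoly := exp_ge_poly7 (t/2) (by linarith)
    have hmono : (1:ℝ) + 3.512405 + 3.512405^2/2 + 3.512405^3/6 + 3.512405^4/24 + 3.512405^5/120 + 3.512405^6/720
        ≤ 1 + (t/2) + (t/2)^2/2 + (t/2)^3/6 + (t/2)^4/24 + (t/2)^5/120 + (t/2)^6/720 := by
      gcongr
    have hval : (31.30:ℝ) ≤ 1 + 3.512405 + 3.512405^2/2 + 3.512405^3/6 + 3.512405^4/24 + 3.512405^5/120 + 3.512405^6/720 := by norm_num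
    linarith
  have hec : Real.exp (-(-(t/2))) ≤ 54.5982 := by rw [neg_neg]; exact (exp_le_e (t/2) 4 (by push_cast; linarith)).trans (by norm_num)
  have hD : (1 - 0.03195:ℝ) ≤ norm (1 - Complex.exp (2 * Real.pi * Complex.I * (((3/6:ℚ):ℂ) * ((-1 + Complex.I * (Real.sqrt 5 : ℂ)) / 2) + ((2/6:ℚ):ℂ)))) := by
    have h := abs_one_sub_ge (Complex.exp (2 * Real.pi * Complex.I * (((3/6:ℚ):ℂ) * ((-1 + Complex.I * (Real.sqrt 5 : ℂ)) / 2) + ((2/6:ℚ):ℂ)))); rw [hb] at h; linarith [heb]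
  refine siegel_lower_generic (3/6) (2/6) ((-1 + Complex.I * (Real.sqrt 5 : ℂ)) / 2) (t/24) (-t) (-(t/2)) 0.000912 0.03195 54.5982 0.0502 (1 - 0.03195) (1.18) hlead ha hb hea heb hec (by norm_num) (by norm_num) (by norm_num) (by norm_num) hD (by norm_num) ?_
  have hexp := Real.add_one_le_exp (t/24)
  nlinarith [Real.exp_pos (t/24)]


lemma case7 : (1.18:ℝ) ≤ norm (siegel (3/6) (1/6) ((-1 + Complex.I * (Real.sqrt 5 : ℂ)) / 2)) := by
  obtain ⟨ht1, ht2⟩ := t_bounds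
  set t : ℝ := Real.pi * Real.sqrt 5 with htdef
  have hπ := Real.pi_pos
  have hlead : norm (Complex.exp (Real.pi * Complex.I * (((3/6:ℚ):ℂ)^2 - ((3/6:ℚ):ℂ) + 1/6) * ((-1 + Complex.I * (Real.sqrt 5 : ℂ)) / 2))) = Real.exp (t/24) := by
    refine abs_exp_of_eq _ (Real.pi/24) ?_
    push_cast [htdef]; ring_nf; simp only [Complex.I_sq]; ring
  have ha : norm (Complex.exp (2 * Real.pi * Complex.I * ((-1 + Complex.I * (Real.sqrt 5 : ℂ)) / 2))) = Real.exp (-t) := by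
    refine abs_exp_of_eq _ (-Real.pi) ?_
    push_cast [htdef]; ring_nf; simp only [Complex.I_sq]; ring
  have hb : norm (Complex.exp (2 * Real.pi * Complex.I * (((3/6:ℚ):ℂ) * ((-1 + Complex.I * (Real.sqrt 5 : ℂ)) / 2) + ((1/6:ℚ):ℂ)))) = Real.exp (-(t/2)) := by
    refine abs_exp_of_eq _ (-(Real.pi/6)) ?_
    push_cast [htdef]; ring_nf; simp only [Complex.I_sq]; ring
  have hea : Real.exp (-t) ≤ 0.000912 := (exp_neg_le_q (t) 7 (by push_cast; linarith)).trans (by norm_num)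
  have heb : Real.exp (-(t/2)) ≤ 0.03195 := by
    refine (exp_neg_le_inv (c := 31.30) ?_ (by norm_num)).trans (by norm_num)
    have hx0 : (3.512405 : ℝ) ≤ t/2 := by linarith
    have hpoly := exp_ge_poly7 (t/2) (by linarith)
    have hmono : (1:ℝ) + 3.512405 + 3.512405^2/2 + 3.512405^3/6 + 3.512405^4/24 + 3.512405^5/120 + 3.512405^6/720
        ≤ 1 + (t/2) + (t/2)^2/2 + (t/2)^3/6 + (t/2)^4/24 + (t/2)^5/120 + (t/2)^6/720 := by
      gcongr
    have hval : (31.30:ℝ) ≤ 1 + 3.512405 + 3.512405^2/2 + 3.512405^3/6 + 3.512405^4/24 + 3.512405^5/120 + 3.512405^6/720 := by norm_num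
    linarith
  have hec : Real.exp (-(-(t/2))) ≤ 54.5982 := by rw [neg_neg]; exact (exp_le_e (t/2) 4 (by push_cast; linarith)).trans (by norm_num)
  have hD : (1 - 0.03195:ℝ) ≤ norm (1 - Complex.exp (2 * Real.pi * Complex.I * (((3/6:ℚ):ℂ) * ((-1 + Complex.I * (Real.sqrt 5 : ℂ)) / 2) + ((1/6:ℚ):ℂ)))) := by
    have h := abs_one_sub_ge (Complex.exp (2 * Real.pi * Complex.I * (((3/6:ℚ):ℂ) * ((-1 + Complex.I * (Real.sqrt 5 : ℂ)) / 2) + ((1/6:ℚ):ℂ)))); rw [hb] at h; linarith [heb]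
  refine siegel_lower_generic (3/6) (1/6) ((-1 + Complex.I * (Real.sqrt 5 : ℂ)) / 2) (t/24) (-t) (-(t/2)) 0.000912 0.03195 54.5982 0.0502 (1 - 0.03195) (1.18) hlead ha hb hea heb hec (by norm_num) (by norm_num) (by norm_num) (by norm_num) hD (by norm_num) ?_
  have hexp := Real.add_one_le_exp (t/24)
  nlinarith [Real.exp_pos (t/24)]


lemma case6 : (0.89:ℝ) ≤ norm (siegel (1/6) (5/6) ((-1 + Complex.I * (Real.sqrt 5 : ℂ)) / 2)) := by
  obtain ⟨ht1, ht2⟩ := t_bounds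
  set t : ℝ := Real.pi * Real.sqrt 5 with htdef
  have hπ := Real.pi_pos
  have hlead : norm (Complex.exp (Real.pi * Complex.I * (((1/6:ℚ):ℂ)^2 - ((1/6:ℚ):ℂ) + 1/6) * ((-1 + Complex.I * (Real.sqrt 5 : ℂ)) / 2))) = Real.exp (-(t/72)) := by
    refine abs_exp_of_eq _ (-(Real.pi/72)) ?_
    push_cast [htdef]; ring_nf; simp only [Complex.I_sq]; ring
  have ha : norm (Complex.exp (2 * Real.pi * Complex.I * ((-1 + Complex.I * (Real.sqrt 5 : ℂ)) / 2))) = Real.exp (-t) := by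
    refine abs_exp_of_eq _ (-Real.pi) ?_
    push_cast [htdef]; ring_nf; simp only [Complex.I_sq]; ring
  have hb : norm (Complex.exp (2 * Real.pi * Complex.I * (((1/6:ℚ):ℂ) * ((-1 + Complex.I * (Real.sqrt 5 : ℂ)) / 2) + ((5/6:ℚ):ℂ)))) = Real.exp (-(t/6)) := by
    refine abs_exp_of_eq _ (3*Real.pi/2) ?_
    push_cast [htdef]; ring_nf; simp only [Complex.I_sq]; ring
  have hea : Real.exp (-t) ≤ 0.000912 := (exp_neg_le_q (t) 7 (by push_cast; linarith)).trans (by norm_num)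
  have heb : Real.exp (-(t/6)) ≤ 1 := by rw [show (1:ℝ) = Real.exp 0 from (Real.exp_zero).symm]; exact Real.exp_le_exp.2 (by linarith)
  have hec : Real.exp (-(-(t/6))) ≤ 7.3891 := by rw [neg_neg]; exact (exp_le_e (t/6) 2 (by push_cast; linarith)).trans (by norm_num)
  have hD : (1:ℝ) ≤ norm (1 - Complex.exp (2 * Real.pi * Complex.I * (((1/6:ℚ):ℂ) * ((-1 + Complex.I * (Real.sqrt 5 : ℂ)) / 2) + ((5/6:ℚ):ℂ)))) := by
    refine one_le_abs_one_sub (re_exp_zero_of_eq (-(t/6)) (3*Real.pi/2) ?_ cos_three_pi_div_two)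
    push_cast [htdef]; ring_nf; simp only [Complex.I_sq]; ring
  refine siegel_lower_generic (1/6) (5/6) ((-1 + Complex.I * (Real.sqrt 5 : ℂ)) / 2) (-(t/72)) (-t) (-(t/6)) 0.000912 1 7.3891 0.0077 (1) (0.89) hlead ha hb hea heb hec (by norm_num) (by norm_num) (by norm_num) (by norm_num) hD (by norm_num) ?_
  have hexp := Real.add_one_le_exp (-(t/72))
  nlinarith [Real.exp_pos (-(t/72))]



lemma case1 : norm (siegel 0 (1/6) (Complex.I * (Real.sqrt 5 : ℂ))) ≤ 0.3103 ∧
    0 < norm (siegel 0 (1/6) (Complex.I * (Real.sqrt 5 : ℂ))) := by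
  obtain ⟨ht1, ht2⟩ := t_bounds
  set t : ℝ := Real.pi * Real.sqrt 5 with htdef
  have hπ := Real.pi_pos
  have hw1 : (Real.pi : ℂ) * Complex.I * (((0:ℚ):ℂ)^2 - ((0:ℚ):ℂ) + 1/6) * (Complex.I * (Real.sqrt 5:ℂ))
      = ((-(t/6) : ℝ) : ℂ) + ((0:ℝ):ℂ) * Complex.I := by
    push_cast [htdef]; ring_nf; rw [Complex.I_sq]; ring
  have hlead : norm (Complex.exp ((Real.pi:ℂ) * Complex.I * (((0:ℚ):ℂ)^2 - ((0:ℚ):ℂ) + 1/6) * (Complex.I * (Real.sqrt 5:ℂ)))) = Real.exp (-(t/6)) :=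
    abs_exp_of_eq _ _ hw1
  have hwz : 2 * (Real.pi:ℂ) * Complex.I * (((0:ℚ):ℂ) * (Complex.I * (Real.sqrt 5:ℂ)) + ((1/6:ℚ):ℂ))
      = ((Real.pi/3 : ℝ):ℂ) * Complex.I := by push_cast; ring
  have hD : norm (1 - Complex.exp (2 * (Real.pi:ℂ) * Complex.I * (((0:ℚ):ℂ) * (Complex.I * (Real.sqrt 5:ℂ)) + ((1/6:ℚ):ℂ)))) = 1 := by
    rw [hwz, Complex.exp_mul_I]
    rw [← Complex.ofReal_cos, ← Complex.ofReal_sin]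
    rw [Real.cos_pi_div_three, Real.sin_pi_div_three]
    rw [Complex.norm_def, Complex.normSq_apply]
    simp only [Complex.sub_re, Complex.sub_im, Complex.one_re, Complex.one_im,
      Complex.add_re, Complex.add_im, Complex.mul_re, Complex.mul_im,
      Complex.ofReal_re, Complex.ofReal_im, Complex.I_re, Complex.I_im]
    have h3 : (Real.sqrt 3) ^ 2 = 3 := Real.sq_sqrt (by norm_num)
    rw [show (1:ℝ) - (1/2 + (Real.sqrt 3/2 * 0 - 0*1)) = 1/2 by ring]
    rw [show (0:ℝ) - (0 + (Real.sqrt 3/2*1 + 0*0)) = -(Real.sqrt 3/2) by ring]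
    rw [show (1/2 : ℝ)*(1/2) + -(Real.sqrt 3/2) * -(Real.sqrt 3/2) = 1/4 + (Real.sqrt 3)^2/4 by ring]
    rw [h3]
    norm_num
  have ha : norm (Complex.exp (2 * (Real.pi:ℝ) * Complex.I * (Complex.I * (Real.sqrt 5:ℂ)))) = Real.exp (-(2*t)) := by
    refine abs_exp_of_eq _ 0 ?_
    push_cast [htdef]; ring_nf; rw [Complex.I_sq]; ring
  have hb : norm (Complex.exp (2 * (Real.pi:ℝ) * Complex.I * (((0:ℚ):ℂ) * (Complex.I * (Real.sqrt 5:ℂ)) + ((1/6:ℚ):ℂ)))) = Real.exp 0 := by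
    refine abs_exp_of_eq _ (Real.pi/3) ?_
    rw [hwz]; push_cast; ring
  have ha14 : Real.exp (-(2*t)) ≤ 0.3678794412 ^ 14 := exp_neg_le_q _ 14 (by push_cast; linarith)
  have hq14 : (0.3678794412 : ℝ) ^ 14 ≤ 0.00000084 := by norm_num
  have haval : Real.exp (-(2*t)) ≤ 0.00000084 := ha14.trans hq14
  have hapos : 0 < Real.exp (-(2*t)) := Real.exp_pos _
  have hx : Real.exp (-(2*t)) < 1 := by
    rw [Real.exp_lt_one_iff]; linarith
  have hS : Real.exp (-(2*t)) * (Real.exp 0 + Real.exp (-0) + Real.exp (-(2*t))) / (1 - Real.exp (-(2*t))) ≤ 0.000002 := by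
    rw [Real.exp_zero, neg_zero, Real.exp_zero]
    rw [div_le_iff₀ (by linarith)]
    nlinarith
  obtain ⟨hP1, hP2⟩ := tprod_siegelTerm_bounds 0 (1/6) (Complex.I * (Real.sqrt 5:ℂ))
    (-(2*t)) 0 0.000002 ha hb hx hS (by norm_num)
  have hPup : norm (∏' n : ℕ, siegelTerm 0 (1/6) (Complex.I * (Real.sqrt 5:ℂ)) n) ≤ (1 - 0.000002)⁻¹ :=
    hP2.trans (exp_le_inv_one_sub (by norm_num))
  have hexp6 : Real.exp (-(t/6)) ≤ (3.2238 : ℝ)⁻¹ := by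
    refine exp_neg_le_inv ?_ (by norm_num)
    have hx0 : (1.170801 : ℝ) ≤ t/6 := by linarith
    have hpoly := exp_ge_poly7 (t/6) (by linarith)
    have hmono : (1:ℝ) + 1.170801 + 1.170801^2/2 + 1.170801^3/6 + 1.170801^4/24 + 1.170801^5/120 + 1.170801^6/720
        ≤ 1 + (t/6) + (t/6)^2/2 + (t/6)^3/6 + (t/6)^4/24 + (t/6)^5/120 + (t/6)^6/720 := by
      gcongr
    have hval : (3.2238:ℝ) ≤ 1 + 1.170801 + 1.170801^2/2 + 1.170801^3/6 + 1.170801^4/24 + 1.170801^5/120 + 1.170801^6/720 := by norm_num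
    linarith
  have hexp6pos : 0 < Real.exp (-(t/6)) := Real.exp_pos _
  rw [siegel_abs]
  rw [hlead, hD]
  constructor
  · calc Real.exp (-(t/6)) * (1 * norm (∏' n : ℕ, siegelTerm 0 (1/6) (Complex.I * (Real.sqrt 5:ℂ)) n))
        ≤ (3.2238:ℝ)⁻¹ * (1 * (1 - 0.000002)⁻¹) := by
          apply mul_le_mul hexp6 (by rw [one_mul, one_mul]; exact hPup)
            (by positivity) (by norm_num)
      _ ≤ 0.3103 := by norm_num
  · have hPpos : (0:ℝ) < norm (∏' n : ℕ, siegelTerm 0 (1/6) (Complex.I * (Real.sqrt 5:ℂ)) n) := by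
      linarith
    positivity

lemma case8 : (0.89:ℝ) ≤ norm (siegel (5/6) (4/6) ((-1 + Complex.I * (Real.sqrt 5:ℂ))/2)) := by
  obtain ⟨ht1, ht2⟩ := t_bounds
  set t : ℝ := Real.pi * Real.sqrt 5 with htdef
  have hπ := Real.pi_pos
  have hlead : norm (Complex.exp ((Real.pi:ℂ) * Complex.I * (((5/6:ℚ):ℂ)^2 - ((5/6:ℚ):ℂ) + 1/6) * ((-1 + Complex.I * (Real.sqrt 5:ℂ))/2))) = Real.exp (-(t/72)) := by
    refine abs_exp_of_eq _ (-(Real.pi/72)) ?_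
    push_cast [htdef]; ring_nf; simp only [Complex.I_sq]; ring
  have hwE : 2 * (Real.pi:ℂ) * Complex.I * ((-1 + Complex.I * (Real.sqrt 5:ℂ))/2)
      = ((-t:ℝ):ℂ) + ((-Real.pi:ℝ):ℂ) * Complex.I := by
    push_cast [htdef]; ring_nf; simp only [Complex.I_sq]; ring
  have ha : norm (Complex.exp (2 * (Real.pi:ℝ) * Complex.I * ((-1 + Complex.I * (Real.sqrt 5:ℂ))/2))) = Real.exp (-t) :=
    abs_exp_of_eq _ _ hwE
  have hwz : 2 * (Real.pi:ℂ) * Complex.I * (((5/6:ℚ):ℂ) * ((-1 + Complex.I * (Real.sqrt 5:ℂ))/2) + ((4/6:ℚ):ℂ))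
      = ((-(5*t/6):ℝ):ℂ) + ((Real.pi/2:ℝ):ℂ) * Complex.I := by
    push_cast [htdef]; ring_nf; simp only [Complex.I_sq]; ring
  have hb : norm (Complex.exp (2 * (Real.pi:ℝ) * Complex.I * (((5/6:ℚ):ℂ) * ((-1 + Complex.I * (Real.sqrt 5:ℂ))/2) + ((4/6:ℚ):ℂ)))) = Real.exp (-(5*t/6)) :=
    abs_exp_of_eq _ _ hwz
  have hea : Real.exp (-t) ≤ 0.000912 :=
    (exp_neg_le_q t 7 (by push_cast; linarith)).trans (by norm_num)
  have heb : Real.exp (-(5*t/6)) ≤ 0.006738 :=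
    (exp_neg_le_q (5*t/6) 5 (by push_cast; linarith)).trans (by norm_num)
  have hec : Real.exp (-(-(5*t/6))) ≤ 403.429 := by
    rw [neg_neg]; exact (exp_le_e (5*t/6) 6 (by push_cast; linarith)).trans (by norm_num)
  have hx : Real.exp (-t) < 1 := by rw [Real.exp_lt_one_iff]; linarith
  -- first factor of the product
  set E := Complex.exp (2 * (Real.pi:ℝ) * Complex.I * ((-1 + Complex.I * (Real.sqrt 5:ℂ))/2)) with hE
  set Q := Complex.exp (2 * (Real.pi:ℝ) * Complex.I * (((5/6:ℚ):ℂ) * ((-1 + Complex.I * (Real.sqrt 5:ℂ))/2) + ((4/6:ℚ):ℂ))) with hQ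
  have hE1 : norm (E ^ (0+1) * Q) ≤ 0.0000062 := by
    rw [pow_one, norm_mul, ha, hb]
    have hmm : Real.exp (-t) * Real.exp (-(5*t/6)) ≤ 0.000912 * 0.006738 :=
      mul_le_mul hea heb (Real.exp_pos _).le (by norm_num)
    nlinarith [hmm]
  have hre : (E ^ (0+1) * Q⁻¹).re = 0 := by
    rw [pow_one, hE, hQ, ← Complex.exp_neg, ← Complex.exp_add]
    refine re_exp_zero_of_eq (-(t/6)) (-(3*Real.pi/2)) ?_ ?_
    · rw [hwE, hwz]; push_cast; ring
    · rw [Real.cos_neg]; exact cos_three_pi_div_two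
  have h0 : 1 - 0.0000062 ≤ norm (siegelTerm (5/6) (4/6) ((-1 + Complex.I * (Real.sqrt 5:ℂ))/2) 0) := by
    have hfact : siegelTerm (5/6) (4/6) ((-1 + Complex.I * (Real.sqrt 5:ℂ))/2) 0
        = (1 - E ^ (0+1) * Q) * (1 - E ^ (0+1) * Q⁻¹) := rfl
    rw [hfact, norm_mul]
    have g1 : 1 - 0.0000062 ≤ norm (1 - E ^ (0+1) * Q) :=
      le_trans (by linarith [hE1]) (abs_one_sub_ge _)
    have g2 : 1 ≤ norm (1 - E ^ (0+1) * Q⁻¹) := one_le_abs_one_sub hre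
    nlinarith [norm_nonneg (1 - E ^ (0+1) * Q)]
  have hSh : (0.0000062:ℝ) + Real.exp (-t) ^ 2 * (Real.exp (-(5*t/6)) + Real.exp (-(-(5*t/6))) + Real.exp (-t)) / (1 - Real.exp (-t)) ≤ 0.00036 :=
    S_helper8 (Real.exp_pos _).le (Real.exp_pos _).le (Real.exp_pos _).le hea heb hec
      (by norm_num) (by norm_num) (by norm_num) (by norm_num)
  have hP := tprod_siegelTerm_lower8 (5/6) (4/6) ((-1 + Complex.I * (Real.sqrt 5:ℂ))/2)
    (-t) (-(5*t/6)) 0.00036 0.0000062 ha hb hx h0 (by norm_num) (by norm_num) hSh (by norm_num)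
  have hD : (1 - 0.006738 : ℝ) ≤ norm (1 - Q) := by
    have h := abs_one_sub_ge Q
    rw [hQ, hb] at h
    rw [hQ]
    linarith [heb]
  rw [siegel_abs, hlead]
  have hexp := Real.add_one_le_exp (-(t/72))
  calc (0.89:ℝ) ≤ Real.exp (-(t/72)) * ((1 - 0.006738) * (1 - 0.00036)) := by
        nlinarith [Real.exp_pos (-(t/72))]
    _ ≤ _ := by
        gcongr <;> first
          | exact (Real.exp_pos _).le
          | exact hD
          | exact hP
          | norm_num



lemma ratio_bound {gi g1 : ℂ} {U L : ℝ}
    (hU : norm g1 ≤ U) (h1 : 0 < norm g1)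
    (hL : L ≤ norm gi) (hL0 : 0 < L)
    (hUL : U ^ 12 < (1/10^4) * L ^ 12) :
    norm (gi ^ (-12:ℤ) / g1 ^ (-12:ℤ)) < 1/10^4 := by
  rw [norm_div, norm_zpow, norm_zpow]
  rw [show ((-12:ℤ)) = -((12:ℕ):ℤ) from rfl, zpow_neg, zpow_neg, zpow_natCast, zpow_natCast]
  rw [div_eq_mul_inv, inv_inv]
  have hgi : 0 < norm gi := lt_of_lt_of_le hL0 hL
  have h2 : L ^ 12 ≤ norm gi ^ 12 := pow_le_pow_left₀ hL0.le hL 12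
  have h3 : norm g1 ^ 12 ≤ U ^ 12 := pow_le_pow_left₀ (norm_nonneg _) hU 12
  have hL12 : (0:ℝ) < L ^ 12 := by positivity
  calc (norm gi ^ 12)⁻¹ * norm g1 ^ 12
      ≤ (L ^ 12)⁻¹ * U ^ 12 := by
        apply mul_le_mul (inv_anti₀ hL12 h2) h3 (by positivity) (by positivity)
    _ < 1/10^4 := by
        rw [inv_mul_lt_iff₀ hL12]
        nlinarith [hUL]


/-- With `x₁, …, x₈` as above, `|xᵢ/x₁| < 10⁻⁴` for `i = 2, …, 8`;
in particular `|xᵢ/x₁| < 1/8` for `i = 2, …, 8`. -/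
theorem example_conjugate_ratios_small :
    ∀ i : Fin 8, i ≠ 0 →
      ‖exampleConjugates i / exampleConjugates 0‖ < 1 / 10 ^ 4 ∧
      ‖exampleConjugates i / exampleConjugates 0‖ < 1 / 8 := by
  intro i hi
  have key : norm (exampleConjugates i / exampleConjugates 0) < 1/10^4 := by
    fin_cases i
    · exact absurd rfl hi
    · exact ratio_bound case1.1 case1.2 case2 (by norm_num) (by norm_num)
    · exact ratio_bound case1.1 case1.2 case3 (by norm_num) (by norm_num)
    · exact ratio_bound case1.1 case1.2 case4 (by norm_num) (by norm_num)
    · exact ratio_bound case1.1 case1.2 case5 (by norm_num) (by norm_num)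
    · exact ratio_bound case1.1 case1.2 case6 (by norm_num) (by norm_num)
    · exact ratio_bound case1.1 case1.2 case7 (by norm_num) (by norm_num)
    · exact ratio_bound case1.1 case1.2 case8 (by norm_num) (by norm_num)
  exact ⟨key, key.trans (by norm_num)⟩
end
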